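/- arXiv:1903.11897 — 6 statements merged into one kernel-verified Lean document; each statement's English description precedes it below -/
import Mathlib

section
/- For the basic space 𝔖 = 𝔖_{τ,d,m} and 1 ≤ k < d, p ∈ [1,∞): the non-centered modified maximal operator satisfies the strong type bound ‖M_k f‖_p^p ≤ 2^{p−1}(2^{p−1} + 1 + τ m^{1−p})‖f‖_p^p for all f ≥ 0. -/
open scoped ENNReal Classical

/-- The metric of the basic space `𝔖_{τ,d,m}`: `ρ(x,y) = 1` if `x_0 ∈ {x,y}`, `ρ(x,y) = d`
otherwise (for `x ≠ y`). -/
noncomputable def rhoS (τ : ℕ) (d : ℝ) (x y : Fin (τ + 1)) : ℝ :=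
  if x = y then 0 else if x = 0 ∨ y = 0 then 1 else d

/-- The measure of `𝔖_{τ,d,m}`: `μ({x_0}) = 1` and `μ({x_i}) = m` for `i ≥ 1`. -/
noncomputable def muS (τ : ℕ) (m : ℝ) (x : Fin (τ + 1)) : ℝ≥0∞ :=
  if x = 0 then 1 else ENNReal.ofReal m

/-- Open balls of `𝔖_{τ,d,m}`. -/
noncomputable def ballS (τ : ℕ) (d : ℝ) (c : Fin (τ + 1)) (r : ℝ) : Finset (Fin (τ + 1)) :=
  Finset.univ.filter (fun y => rhoS τ d c y < r)

/-- The non-centered modified Hardy–Littlewood maximal operator `M_k` on `𝔖_{τ,d,m}`. -/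
noncomputable def MkS (τ : ℕ) (d m k : ℝ) (f : Fin (τ + 1) → ℝ≥0∞) (x : Fin (τ + 1)) : ℝ≥0∞ :=
  ⨆ (c : Fin (τ + 1)) (r : ℝ) (_ : 0 < r) (_ : x ∈ ballS τ d c r),
    (∑ y ∈ ballS τ d c r, f y * muS τ m y) / (∑ y ∈ ballS τ d c (k * r), muS τ m y)


noncomputable def auxA (τ : ℕ) (m : ℝ) (f : Fin (τ + 1) → ℝ≥0∞) : ℝ≥0∞ :=
  (∑ y, f y * muS τ m y) / (∑ y, muS τ m y)

noncomputable def auxG (τ : ℕ) (m : ℝ) (f : Fin (τ + 1) → ℝ≥0∞) (i : Fin (τ + 1)) : ℝ≥0∞ :=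
  if i = 0 then f 0 ⊔ auxA τ m f
  else ENNReal.ofReal m * f i / (1 + ENNReal.ofReal m) + (f 0 ⊔ auxA τ m f)

noncomputable def auxB (τ : ℕ) (m : ℝ) (f : Fin (τ + 1) → ℝ≥0∞) (x : Fin (τ + 1)) : ℝ≥0∞ :=
  if x = 0 then ⨆ i, auxG τ m f i
  else f 0 / (1 + ENNReal.ofReal m) + (f x ⊔ auxA τ m f)

lemma mem_ballS {τ : ℕ} {d : ℝ} {c y : Fin (τ + 1)} {r : ℝ} :
    y ∈ ballS τ d c r ↔ rhoS τ d c y < r := by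
  simp [ballS]

lemma rhoS_self (τ : ℕ) (d : ℝ) (c : Fin (τ + 1)) : rhoS τ d c c = 0 := by simp [rhoS]

lemma one_le_rhoS {τ : ℕ} {d : ℝ} (hd : 1 ≤ d) {c y : Fin (τ + 1)} (h : c ≠ y) :
    1 ≤ rhoS τ d c y := by
  simp only [rhoS, if_neg h]
  split
  · exact le_rfl
  · exact hd

lemma rhoS_le {τ : ℕ} {d : ℝ} (hd : 1 ≤ d) (c y : Fin (τ + 1)) : rhoS τ d c y ≤ d := by
  simp only [rhoS]
  split
  · linarith
  · split
    · exact hd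
    · exact le_rfl

lemma muS_ne_zero {τ : ℕ} {m : ℝ} (hm : 0 < m) (x : Fin (τ + 1)) : muS τ m x ≠ 0 := by
  simp only [muS]; split
  · exact one_ne_zero
  · simp [ENNReal.ofReal_eq_zero, not_le, hm]

lemma muS_ne_top {τ : ℕ} {m : ℝ} (x : Fin (τ + 1)) : muS τ m x ≠ ⊤ := by
  simp only [muS]; split
  · exact ENNReal.one_ne_top
  · exact ENNReal.ofReal_ne_top

lemma fA_le_auxB (τ : ℕ) (m : ℝ) (f : Fin (τ + 1) → ℝ≥0∞) (x : Fin (τ + 1)) :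
    f x ⊔ auxA τ m f ≤ auxB τ m f x := by
  unfold auxB
  split
  · rename_i h
    subst h
    refine le_trans ?_ (le_iSup _ (0 : Fin (τ + 1)))
    simp [auxG]
  · exact le_add_self

lemma MkS_le_auxB (τ : ℕ) (d m k : ℝ)
    (hd1 : 1 < d) (hm : 1 < m) (hk1 : 1 ≤ k) (f : Fin (τ + 1) → ℝ≥0∞) (x : Fin (τ + 1)) :
    MkS τ d m k f x ≤ auxB τ m f x := by
  have hm0 : (0:ℝ) < m := lt_trans one_pos hm
  set em : ℝ≥0∞ := ENNReal.ofReal m with hem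
  have hem1 : (1:ℝ≥0∞) ≤ em := (ENNReal.one_lt_ofReal.mpr hm).le
  refine iSup_le fun c => iSup_le fun r => iSup_le fun hr => iSup_le fun hx => ?_
  have hrkr : r ≤ k * r := le_mul_of_one_le_left hr.le hk1
  have hnum_univ : (∑ y ∈ ballS τ d c r, f y * muS τ m y) ≤ ∑ y, f y * muS τ m y :=
    Finset.sum_le_sum_of_subset (Finset.subset_univ _)
  rcases le_or_gt r 1 with hr1 | hr1
  · -- B = {c}, ratio ≤ f c = f x
    have hsub : ballS τ d c r ⊆ {c} := by
      intro y hy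
      rw [mem_ballS] at hy
      simp only [Finset.mem_singleton]
      by_contra hne
      exact absurd (lt_of_lt_of_le hy hr1) (not_lt.mpr (one_le_rhoS hd1.le (Ne.symm hne)))
    have hxc : x = c := Finset.mem_singleton.mp (hsub hx)
    have hnum : (∑ y ∈ ballS τ d c r, f y * muS τ m y) ≤ f c * muS τ m c := by
      calc (∑ y ∈ ballS τ d c r, f y * muS τ m y) ≤ ∑ y ∈ {c}, f y * muS τ m y :=
            Finset.sum_le_sum_of_subset hsub
        _ = f c * muS τ m c := Finset.sum_singleton _ _
    have hden : muS τ m c ≤ ∑ y ∈ ballS τ d c (k * r), muS τ m y := by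
      refine Finset.single_le_sum (fun i _ => zero_le) ?_
      rw [mem_ballS, rhoS_self]
      positivity
    calc (∑ y ∈ ballS τ d c r, f y * muS τ m y) / (∑ y ∈ ballS τ d c (k * r), muS τ m y)
        ≤ (f c * muS τ m c) / (muS τ m c) := ENNReal.div_le_div hnum hden
      _ = f c := by rw [mul_div_assoc, ENNReal.div_self (muS_ne_zero hm0 c) (muS_ne_top c), mul_one]
      _ ≤ auxB τ m f x := by rw [hxc] at *; exact le_trans le_sup_left (fA_le_auxB τ m f c)
  · -- r > 1
    have hkr1 : (1:ℝ) < k * r := lt_of_lt_of_le hr1 hrkr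
    have hA_le : auxA τ m f ≤ auxB τ m f x := le_trans le_sup_right (fA_le_auxB τ m f x)
    have hratio_A : ∀ (hden : (∑ y, muS τ m y) ≤ ∑ y ∈ ballS τ d c (k * r), muS τ m y),
        (∑ y ∈ ballS τ d c r, f y * muS τ m y) / (∑ y ∈ ballS τ d c (k * r), muS τ m y)
          ≤ auxB τ m f x := fun hden =>
      le_trans (ENNReal.div_le_div hnum_univ hden) hA_le
    rcases eq_or_ne c 0 with hc0 | hc0
    · -- c = 0 : ball(0, kr) = univ
      subst hc0
      refine hratio_A (Finset.sum_le_sum_of_subset fun y _ => ?_)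
      rw [mem_ballS]
      rcases eq_or_ne (0 : Fin (τ + 1)) y with h | h
      · rw [← h, rhoS_self]; positivity
      · calc rhoS τ d 0 y = 1 := by simp [rhoS, h]
          _ < k * r := hkr1
    · rcases le_or_gt r d with hrd | hrd
      · -- B ⊆ {0, c}, kB ⊇ {0, c}
        have h0c : (0 : Fin (τ + 1)) ≠ c := Ne.symm hc0
        have hsub : ballS τ d c r ⊆ {0, c} := by
          intro y hy
          rw [mem_ballS] at hy
          simp only [Finset.mem_insert, Finset.mem_singleton]
          by_contra hne
          push_neg at hne
          have : rhoS τ d c y = d := by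
            simp [rhoS, hne.1, hne.2, hc0, Ne.symm hne.2]
          rw [this] at hy
          linarith
        have hnum : (∑ y ∈ ballS τ d c r, f y * muS τ m y) ≤ f 0 + f c * em := by
          calc (∑ y ∈ ballS τ d c r, f y * muS τ m y)
              ≤ ∑ y ∈ {0, c}, f y * muS τ m y := Finset.sum_le_sum_of_subset hsub
            _ = f 0 * muS τ m 0 + f c * muS τ m c := Finset.sum_pair h0c
            _ = f 0 + f c * em := by simp [muS, hc0, hem]
        have hden : (1 : ℝ≥0∞) + em ≤ ∑ y ∈ ballS τ d c (k * r), muS τ m y := by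
          have hsub2 : ({0, c} : Finset (Fin (τ + 1))) ⊆ ballS τ d c (k * r) := by
            intro y hy
            simp only [Finset.mem_insert, Finset.mem_singleton] at hy
            rw [mem_ballS]
            rcases hy with h | h
            · subst h
              calc rhoS τ d c 0 = 1 := by simp [rhoS, hc0]
                _ < k * r := hkr1
            · subst h; rw [rhoS_self]; positivity
          calc (1 : ℝ≥0∞) + em = ∑ y ∈ {0, c}, muS τ m y := by
                rw [Finset.sum_pair h0c]; simp [muS, hc0, hem]
            _ ≤ _ := Finset.sum_le_sum_of_subset hsub2
        have hxmem : x = 0 ∨ x = c := by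
          have := hsub hx
          simpa using this
        have havg : (∑ y ∈ ballS τ d c r, f y * muS τ m y)
            / (∑ y ∈ ballS τ d c (k * r), muS τ m y) ≤ (f 0 + f c * em) / (1 + em) :=
          ENNReal.div_le_div hnum hden
        have hsplit : (f 0 + f c * em) / (1 + em) = f 0 / (1 + em) + em * f c / (1 + em) := by
          rw [ENNReal.add_div, mul_comm]
        have he1m : (1:ℝ≥0∞) ≤ 1 + em := le_add_right le_rfl
        rcases hxmem with hx0 | hxc
        · -- x = 0 : use auxG c
          subst hx0
          refine le_trans havg ?_
          unfold auxB
          rw [if_pos rfl]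
          refine le_trans ?_ (le_iSup _ c)
          unfold auxG
          rw [if_neg hc0, hsplit, add_comm]
          gcongr
          refine le_trans ?_ le_sup_left
          rw [div_eq_mul_inv]
          exact mul_le_of_le_one_right' (ENNReal.inv_le_one.mpr he1m)
        · -- x = c
          subst hxc
          refine le_trans havg ?_
          unfold auxB
          rw [if_neg hc0, hsplit]
          gcongr
          refine le_trans ?_ le_sup_left
          have h1 : em * f x / (1 + em) ≤ (1 + em) * f x / (1 + em) := by
            gcongr
            exact le_add_self
          refine le_trans h1 ?_
          rw [mul_comm (1 + em), mul_div_assoc, ENNReal.div_self (by simp) (by simp [hem]), mul_one]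
      · -- r > d : both balls are univ
        refine hratio_A (Finset.sum_le_sum_of_subset fun y _ => ?_)
        rw [mem_ballS]
        exact lt_of_le_of_lt (rhoS_le hd1.le c y) (lt_of_lt_of_le hrd hrkr)

/-- For `𝔖_{τ,d,m}`, `1 ≤ k < d` and `p ∈ [1,∞)`:
`‖M_k f‖_p^p ≤ 2^(p-1) (2^(p-1) + 1 + τ m^(1-p)) ‖f‖_p^p` for all `f ≥ 0`. -/
theorem stmt9 (τ : ℕ) (hτ : 1 ≤ τ) (d m k p : ℝ)
    (hd1 : 1 < d) (hd2 : d ≤ 2) (hm : 1 < m) (hk1 : 1 ≤ k) (hkd : k < d) (hp : 1 ≤ p)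
    (f : Fin (τ + 1) → ℝ≥0∞) :
    (∑ x : Fin (τ + 1), (MkS τ d m k f x) ^ p * muS τ m x)
      ≤ ENNReal.ofReal ((2 : ℝ) ^ (p - 1) * ((2 : ℝ) ^ (p - 1) + 1 + (τ : ℝ) * m ^ (1 - p)))
          * ∑ x : Fin (τ + 1), (f x) ^ p * muS τ m x := by
  classical
  have hm0 : (0:ℝ) < m := lt_trans one_pos hm
  have hp0 : (0:ℝ) ≤ p := le_trans zero_le_one hp
  set em : ℝ≥0∞ := ENNReal.ofReal m with hem
  have hem1 : (1:ℝ≥0∞) ≤ em := (ENNReal.one_lt_ofReal.mpr hm).le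
  have hemt : em ≠ ⊤ := ENNReal.ofReal_ne_top
  have hem0 : em ≠ 0 := by
    rw [hem, Ne, ENNReal.ofReal_eq_zero, not_le]; exact hm0
  set e1m : ℝ≥0∞ := 1 + em with he1m
  have hee : em ≤ e1m := le_add_self
  set A : ℝ≥0∞ := auxA τ m f with hA
  set E : Finset (Fin (τ+1)) := Finset.univ.erase 0 with hE
  have hcardE : E.card = τ := by
    rw [hE, Finset.card_erase_of_mem (Finset.mem_univ _), Finset.card_univ, Fintype.card_fin]
    omega
  set S : ℝ≥0∞ := ∑ x : Fin (τ + 1), (f x) ^ p * muS τ m x with hS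
  set Sg : ℝ≥0∞ := ∑ i ∈ E, f i ^ p with hSg
  set μtot : ℝ≥0∞ := ∑ y, muS τ m y with hμtot
  have hmuE : ∀ i ∈ E, muS τ m i = em := by
    intro i hi
    have : i ≠ 0 := (Finset.mem_erase.mp hi).1
    simp [muS, this, hem]
  have hμtot_eq : μtot = 1 + (τ:ℝ≥0∞) * em := by
    have h1 : ∑ i ∈ E, muS τ m i = (τ:ℝ≥0∞) * em := by
      rw [Finset.sum_congr rfl hmuE, Finset.sum_const, hcardE, nsmul_eq_mul]
    have h0 : muS τ m 0 = 1 := by simp [muS]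
    rw [hμtot, ← Finset.add_sum_erase _ _ (Finset.mem_univ (0 : Fin (τ+1))), ← hE, h1, h0]
  have hμtot0 : μtot ≠ 0 := by rw [hμtot_eq]; simp
  have hμtott : μtot ≠ ⊤ := by
    rw [hμtot_eq]
    exact ENNReal.add_ne_top.mpr ⟨ENNReal.one_ne_top,
      ENNReal.mul_ne_top (ENNReal.natCast_ne_top τ) hemt⟩
  have hS_eq : S = f 0 ^ p + em * Sg := by
    have h1 : ∑ i ∈ E, f i ^ p * muS τ m i = em * Sg := by
      rw [Finset.sum_congr rfl (fun i hi => by rw [hmuE i hi]), ← Finset.sum_mul, hSg, mul_comm]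
    have h0 : f 0 ^ p * muS τ m 0 = f 0 ^ p := by simp [muS]
    rw [hS, ← Finset.add_sum_erase _ _ (Finset.mem_univ (0 : Fin (τ+1))), ← hE, h1, h0]
  -- Jensen : μtot * A^p ≤ S
  have hJensen : μtot * A ^ p ≤ S := by
    have hw : ∑ i, muS τ m i / μtot = 1 := by
      simp only [div_eq_mul_inv]
      rw [← Finset.sum_mul, ← hμtot]
      exact ENNReal.mul_inv_cancel hμtot0 hμtott
    have h := ENNReal.rpow_arith_mean_le_arith_mean_rpow Finset.univ
      (fun i => muS τ m i / μtot) f hw hp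
    have hL : (∑ i, muS τ m i / μtot * f i) = A := by
      rw [hA, auxA, ← hμtot, div_eq_mul_inv, Finset.sum_mul]
      refine Finset.sum_congr rfl fun i _ => ?_
      simp only [div_eq_mul_inv]; ring
    have hR : (∑ i, muS τ m i / μtot * f i ^ p) = S / μtot := by
      rw [hS, div_eq_mul_inv, Finset.sum_mul]
      refine Finset.sum_congr rfl fun i _ => ?_
      simp only [div_eq_mul_inv]; ring
    rw [hL, hR] at h
    calc μtot * A ^ p ≤ μtot * (S / μtot) := mul_le_mul_right h _
      _ = S := ENNReal.mul_div_cancel hμtot0 hμtott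
  -- constants
  set c2 : ℝ≥0∞ := (2:ℝ≥0∞) ^ (p - 1) with hc2
  have h2 : (1:ℝ≥0∞) ≤ c2 := by
    rw [hc2]
    calc (1:ℝ≥0∞) = 2 ^ (0:ℝ) := by rw [ENNReal.rpow_zero]
      _ ≤ 2 ^ (p - 1) := ENNReal.rpow_le_rpow_of_exponent_le (by norm_num) (by linarith)
  set K : ℝ≥0∞ := c2 + 1 + (τ:ℝ≥0∞) * em ^ (1 - p) with hK
  have hsupmax : ∀ a b : ℝ≥0∞, (a ⊔ b) ^ p ≤ a ^ p + b ^ p := by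
    intro a b
    rcases le_total a b with h | h
    · rw [sup_eq_right.mpr h]; exact le_add_self
    · rw [sup_eq_left.mpr h]; exact le_self_add
  -- Step 1 : pointwise bound and splitting the sum
  have step1 : (∑ x : Fin (τ + 1), (MkS τ d m k f x) ^ p * muS τ m x)
      ≤ (⨆ i, auxG τ m f i) ^ p + ∑ i ∈ E, (f 0 / e1m + (f i ⊔ A)) ^ p * em := by
    calc (∑ x : Fin (τ + 1), (MkS τ d m k f x) ^ p * muS τ m x)
        ≤ ∑ x : Fin (τ + 1), (auxB τ m f x) ^ p * muS τ m x :=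
          Finset.sum_le_sum fun x _ =>
            mul_le_mul_left (ENNReal.rpow_le_rpow (MkS_le_auxB τ d m k hd1 hm hk1 f x) hp0) _
      _ = (auxB τ m f 0) ^ p * muS τ m 0 + ∑ i ∈ E, (auxB τ m f i) ^ p * muS τ m i :=
          (Finset.add_sum_erase _ _ (Finset.mem_univ (0 : Fin (τ+1)))).symm
      _ = (⨆ i, auxG τ m f i) ^ p + ∑ i ∈ E, (f 0 / e1m + (f i ⊔ A)) ^ p * em := by
          congr 1
          · simp [auxB, muS]
          · refine Finset.sum_congr rfl fun i hi => ?_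
            rw [hmuE i hi]
            congr 2
            unfold auxB
            rw [if_neg (Finset.mem_erase.mp hi).1, ← hA, ← hem, ← he1m]
  -- Step 2 : bound the supremum term
  have hQ : (⨆ i, auxG τ m f i) ^ p ≤ c2 * ((em / e1m) ^ p * Sg + (f 0 ^ p + A ^ p)) := by
    obtain ⟨i₀, hi₀⟩ := Finite.exists_max (auxG τ m f)
    have hqe : (⨆ i, auxG τ m f i) = auxG τ m f i₀ := le_antisymm (iSup_le hi₀) (le_iSup _ _)
    rw [hqe]
    by_cases h0 : i₀ = 0
    · have hg : auxG τ m f i₀ = f 0 ⊔ A := by unfold auxG; rw [if_pos h0, ← hA]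
      rw [hg]
      calc (f 0 ⊔ A) ^ p ≤ f 0 ^ p + A ^ p := hsupmax _ _
        _ ≤ (em / e1m) ^ p * Sg + (f 0 ^ p + A ^ p) := le_add_self
        _ ≤ c2 * ((em / e1m) ^ p * Sg + (f 0 ^ p + A ^ p)) :=
            le_mul_of_one_le_left (zero_le) h2
    · have hg : auxG τ m f i₀ = em * f i₀ / e1m + (f 0 ⊔ A) := by
        unfold auxG; rw [if_neg h0, ← hA, ← hem, ← he1m]
      rw [hg]
      have ha : em * f i₀ / e1m = em / e1m * f i₀ := by
        simp only [div_eq_mul_inv]; ring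
      calc (em * f i₀ / e1m + (f 0 ⊔ A)) ^ p
          ≤ c2 * ((em * f i₀ / e1m) ^ p + (f 0 ⊔ A) ^ p) :=
            ENNReal.rpow_add_le_mul_rpow_add_rpow _ _ hp
        _ ≤ c2 * ((em / e1m) ^ p * Sg + (f 0 ^ p + A ^ p)) := by
            refine mul_le_mul_right (add_le_add ?_ (hsupmax _ _)) _
            rw [ha, ENNReal.mul_rpow_of_nonneg _ _ hp0]
            refine mul_le_mul_right ?_ _
            rw [hSg]
            exact Finset.single_le_sum (f := fun j => f j ^ p) (fun j _ => zero_le)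
              (Finset.mem_erase.mpr ⟨h0, Finset.mem_univ _⟩)
  -- Step 3 : bound each term of the erase sum
  have hterm : ∀ i ∈ E, (f 0 / e1m + (f i ⊔ A)) ^ p * em
      ≤ (c2 * em * (f 0 ^ p / e1m ^ p) + c2 * em * A ^ p) + (c2 * em) * f i ^ p := by
    intro i _
    have h1 : (f 0 / e1m + (f i ⊔ A)) ^ p ≤ c2 * (f 0 ^ p / e1m ^ p + (f i ^ p + A ^ p)) := by
      calc (f 0 / e1m + (f i ⊔ A)) ^ p ≤ c2 * ((f 0 / e1m) ^ p + (f i ⊔ A) ^ p) :=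
            ENNReal.rpow_add_le_mul_rpow_add_rpow _ _ hp
        _ ≤ c2 * (f 0 ^ p / e1m ^ p + (f i ^ p + A ^ p)) := by
            refine mul_le_mul_right (add_le_add ?_ (hsupmax _ _)) _
            rw [ENNReal.div_rpow_of_nonneg _ _ hp0]
    calc (f 0 / e1m + (f i ⊔ A)) ^ p * em ≤ c2 * (f 0 ^ p / e1m ^ p + (f i ^ p + A ^ p)) * em :=
          mul_le_mul_left h1 _
      _ = (c2 * em * (f 0 ^ p / e1m ^ p) + c2 * em * A ^ p) + (c2 * em) * f i ^ p := by
          simp only [div_eq_mul_inv]; ring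
  have hsum : ∑ i ∈ E, (f 0 / e1m + (f i ⊔ A)) ^ p * em
      ≤ (τ:ℝ≥0∞) * (c2 * em * (f 0 ^ p / e1m ^ p) + c2 * em * A ^ p) + (c2 * em) * Sg := by
    calc ∑ i ∈ E, (f 0 / e1m + (f i ⊔ A)) ^ p * em
        ≤ ∑ i ∈ E, ((c2 * em * (f 0 ^ p / e1m ^ p) + c2 * em * A ^ p) + (c2 * em) * f i ^ p) :=
          Finset.sum_le_sum hterm
      _ = (τ:ℝ≥0∞) * (c2 * em * (f 0 ^ p / e1m ^ p) + c2 * em * A ^ p) + (c2 * em) * Sg := by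
          rw [Finset.sum_add_distrib, Finset.sum_const, ← Finset.mul_sum, hcardE, nsmul_eq_mul,
            hSg]
  -- Step 4 : key scalar inequalities
  have hCdiv : em / e1m ^ p ≤ em ^ (1 - p) := by
    have h1 : em ^ p ≤ e1m ^ p := ENNReal.rpow_le_rpow hee hp0
    calc em / e1m ^ p ≤ em / em ^ p := ENNReal.div_le_div le_rfl h1
      _ = em ^ (1 - p) := by
        rw [ENNReal.rpow_sub 1 p hem0 hemt, ENNReal.rpow_one]
  have hτ1 : (1:ℝ≥0∞) ≤ (τ:ℝ≥0∞) := by exact_mod_cast hτ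
  have h21 : (2:ℝ≥0∞) ≤ c2 + 1 := by
    calc (2:ℝ≥0∞) = 1 + 1 := by norm_num
      _ ≤ c2 + 1 := add_le_add_left h2 1
  have hC1 : 2 + (τ:ℝ≥0∞) * (em / e1m ^ p) ≤ K := by
    rw [hK]
    exact add_le_add h21 (mul_le_mul_right hCdiv _)
  have hC2 : 2 + em ^ (p-1) / e1m ^ p ≤ K := by
    rcases le_total p 2 with hp2 | hp2
    · have h1 : em ^ (p-1) / e1m ^ p ≤ (τ:ℝ≥0∞) * em ^ (1 - p) := by
        have h2' : em ^ (p-1) / e1m ^ p ≤ em ^ (p-1) / em ^ p :=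
          ENNReal.div_le_div le_rfl (ENNReal.rpow_le_rpow hee hp0)
        have h3 : em ^ (p-1) / em ^ p = em ^ ((p-1) - p) :=
          (ENNReal.rpow_sub (p-1) p hem0 hemt).symm
        have h4 : em ^ ((p-1) - p) ≤ em ^ (1 - p) :=
          ENNReal.rpow_le_rpow_of_exponent_le hem1 (by linarith)
        calc em ^ (p-1) / e1m ^ p ≤ em ^ ((p-1) - p) := h3 ▸ h2'
          _ ≤ em ^ (1-p) := h4
          _ ≤ (τ:ℝ≥0∞) * em ^ (1-p) := le_mul_of_one_le_left (zero_le) hτ1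
      rw [hK]
      exact add_le_add h21 h1
    · have h1 : em ^ (p-1) / e1m ^ p ≤ 1 := by
        refine ENNReal.div_le_of_le_mul ?_
        rw [one_mul]
        calc em ^ (p-1) ≤ e1m ^ (p-1) := ENNReal.rpow_le_rpow hee (by linarith)
          _ ≤ e1m ^ p := ENNReal.rpow_le_rpow_of_exponent_le
              (le_trans hem1 hee) (by linarith)
      have h3 : (2:ℝ≥0∞) + 1 ≤ c2 + 1 := by
        refine add_le_add_left ?_ 1
        calc (2:ℝ≥0∞) = 2 ^ (1:ℝ) := (ENNReal.rpow_one 2).symm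
          _ ≤ c2 := ENNReal.rpow_le_rpow_of_exponent_le (by norm_num) (by linarith)
      calc 2 + em ^ (p-1) / e1m ^ p ≤ 2 + 1 := add_le_add_right h1 _
        _ ≤ c2 + 1 := h3
        _ ≤ K := by rw [hK]; exact le_self_add
  -- Step 5 : assemble
  have hsplitp : em ^ (p - 1) * em = em ^ p := by
    calc em ^ (p-1) * em = em ^ (p-1) * em ^ (1:ℝ) := by rw [ENNReal.rpow_one]
      _ = em ^ (p-1+1) := (ENNReal.rpow_add _ _ hem0 hemt).symm
      _ = em ^ p := by norm_num
  have hX1 : (em / e1m) ^ p * Sg = em ^ (p-1) / e1m ^ p * (em * Sg) := by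
    rw [ENNReal.div_rpow_of_nonneg _ _ hp0, ← hsplitp]
    simp only [div_eq_mul_inv]; ring
  have step2 : (⨆ i, auxG τ m f i) ^ p + ∑ i ∈ E, (f 0 / e1m + (f i ⊔ A)) ^ p * em
      ≤ c2 * (K * S) := by
    calc (⨆ i, auxG τ m f i) ^ p + ∑ i ∈ E, (f 0 / e1m + (f i ⊔ A)) ^ p * em
        ≤ c2 * ((em / e1m) ^ p * Sg + (f 0 ^ p + A ^ p))
          + ((τ:ℝ≥0∞) * (c2 * em * (f 0 ^ p / e1m ^ p) + c2 * em * A ^ p) + (c2 * em) * Sg) :=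
          add_le_add hQ hsum
      _ = c2 * ( f 0 ^ p * (1 + (τ:ℝ≥0∞) * (em / e1m ^ p))
            + (em * Sg) * (1 + em ^ (p-1) / e1m ^ p) + μtot * A ^ p ) := by
          rw [hX1, hμtot_eq]
          simp only [div_eq_mul_inv]; ring
      _ ≤ c2 * ( f 0 ^ p * (1 + (τ:ℝ≥0∞) * (em / e1m ^ p))
            + (em * Sg) * (1 + em ^ (p-1) / e1m ^ p) + S ) :=
          mul_le_mul_right (add_le_add_right hJensen _) _
      _ = c2 * ( f 0 ^ p * (2 + (τ:ℝ≥0∞) * (em / e1m ^ p))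
            + (em * Sg) * (2 + em ^ (p-1) / e1m ^ p) ) := by
          rw [hS_eq]; simp only [div_eq_mul_inv]; ring
      _ ≤ c2 * ( f 0 ^ p * K + (em * Sg) * K ) :=
          mul_le_mul_right (add_le_add (mul_le_mul_right hC1 _) (mul_le_mul_right hC2 _)) _
      _ = c2 * (K * S) := by rw [hS_eq]; ring
  have hRHS : ENNReal.ofReal ((2 : ℝ) ^ (p - 1) * ((2 : ℝ) ^ (p - 1) + 1 + (τ : ℝ) * m ^ (1 - p)))
      = c2 * K := by
    rw [ENNReal.ofReal_mul (by positivity)]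
    congr 1
    · rw [← ENNReal.ofReal_rpow_of_pos (by norm_num : (0:ℝ) < 2), hc2]
      norm_num
    · rw [hK, ENNReal.ofReal_add (by positivity) (by positivity),
        ENNReal.ofReal_add (by positivity) (by norm_num : (0:ℝ) ≤ 1), ENNReal.ofReal_one,
        ENNReal.ofReal_mul (by positivity), ENNReal.ofReal_natCast,
        ← ENNReal.ofReal_rpow_of_pos (by norm_num : (0:ℝ) < 2),
        ← ENNReal.ofReal_rpow_of_pos hm0, ← hem, hc2]
      norm_num
  rw [hRHS, mul_assoc]
  exact le_trans step1 step2
end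

section
/- For the basic space 𝔖 = 𝔖_{τ,d,m}, 1 ≤ k < d, and p ∈ [1,∞): testing the centered operator on f = δ_{x_0} gives M_k^c f(x_i) = 1/(1+m) for i = 1,…,τ, and hence the best weak (p,p) constant satisfies c^c(k,p) ≥ (1/(3m)) (τ m)^{1/p} ≳ τ^{1/p} m^{1/p−1}. -/
open scoped ENNReal Classical

/-- The centered modified Hardy–Littlewood maximal operator `M_k^c` on `𝔖_{τ,d,m}`. -/
noncomputable def MkcS (τ : ℕ) (d m k : ℝ) (f : Fin (τ + 1) → ℝ≥0∞) (x : Fin (τ + 1)) : ℝ≥0∞ :=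
  ⨆ (r : ℝ) (_ : 0 < r),
    (∑ y ∈ ballS τ d x r, f y * muS τ m y) / (∑ y ∈ ballS τ d x (k * r), muS τ m y)

/-- Testing the centered operator on `f = δ_{x_0}` in `𝔖_{τ,d,m}` with `1 ≤ k < d`:
`M_k^c f (x_i) = 1/(1+m)` for `i = 1,…,τ`, and hence every weak `(p,p)` constant `C` for
`M_k^c` satisfies `C ≥ (1/(3m)) (τ m)^(1/p)`. -/
theorem stmt10 (τ : ℕ) (hτ : 1 ≤ τ) (d m k p : ℝ)
    (hd1 : 1 < d) (hd2 : d ≤ 2) (hm : 1 < m) (hk1 : 1 ≤ k) (hkd : k < d) (hp : 1 ≤ p) :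
    (∀ i : Fin (τ + 1), i ≠ 0 →
      MkcS τ d m k (fun x => if x = 0 then 1 else 0) i = (1 + ENNReal.ofReal m)⁻¹) ∧
    ∀ C : ℝ≥0∞,
      (∀ (f : Fin (τ + 1) → ℝ≥0∞) (lam : ℝ≥0∞),
        lam * (∑ x ∈ Finset.univ.filter (fun x => lam < MkcS τ d m k f x), muS τ m x) ^ (1 / p)
          ≤ C * (∑ x : Fin (τ + 1), f x ^ p * muS τ m x) ^ (1 / p)) →
      ENNReal.ofReal ((1 / (3 * m)) * ((τ : ℝ) * m) ^ (1 / p)) ≤ C := by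
  have hm0 : (0:ℝ) < m := by linarith
  have hk0 : (0:ℝ) < k := by linarith
  have hp0 : (0:ℝ) < p := by linarith
  have hτ1 : (1:ℝ) ≤ (τ:ℝ) := by exact_mod_cast hτ
  set M : ℝ≥0∞ := ENNReal.ofReal m with hM
  have key : ∀ i : Fin (τ + 1), i ≠ 0 →
      MkcS τ d m k (fun x => if x = 0 then 1 else 0) i = (1 + M)⁻¹ := by
    intro i hi
    have hrho0 : rhoS τ d i 0 = 1 := by simp [rhoS, hi]
    have hpair : ∀ s : ℝ, 1 < s → s ≤ d →
        (1 + M) ≤ ∑ y ∈ ballS τ d i s, muS τ m y := by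
      intro s hs1 _
      have hsub : ({0, i} : Finset (Fin (τ + 1))) ⊆ ballS τ d i s := by
        intro y hy
        simp only [Finset.mem_insert, Finset.mem_singleton] at hy
        rcases hy with rfl | rfl
        · simp [ballS, hrho0, hs1]
        · simp only [ballS, Finset.mem_filter, Finset.mem_univ, true_and]; simp [rhoS, show (0:ℝ) < s by linarith]
      calc (1 : ℝ≥0∞) + M = ∑ y ∈ ({0, i} : Finset (Fin (τ + 1))), muS τ m y := by
            rw [Finset.sum_pair (Ne.symm hi)]
            simp [muS, hi, hM]
        _ ≤ _ := Finset.sum_le_sum_of_subset hsub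
    have hnum : ∀ s : ℝ,
        (∑ y ∈ ballS τ d i s, (if y = 0 then (1:ℝ≥0∞) else 0) * muS τ m y)
          = if (1:ℝ) < s then 1 else 0 := by
      intro s
      have : ∀ y : Fin (τ + 1),
          (if y = 0 then (1:ℝ≥0∞) else 0) * muS τ m y = if y = 0 then 1 else 0 := by
        intro y
        by_cases hy : y = 0 <;> simp [hy, muS]
      rw [Finset.sum_congr rfl fun y _ => this y, Finset.sum_ite_eq' (ballS τ d i s) 0]
      by_cases h1 : (1:ℝ) < s
      · simp [ballS, hrho0, h1]
      · simp [ballS, hrho0, h1]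
    rw [MkcS]
    apply le_antisymm
    · apply iSup_le; intro r; apply iSup_le; intro hr
      rcases le_or_gt r 1 with h1 | h1
      · rw [hnum, if_neg (not_lt.mpr h1)]
        simp
      · have hkr1 : (1:ℝ) < k * r := by nlinarith
        rcases le_or_gt (k * r) d with h2 | h2
        · have hden := hpair (k * r) hkr1 h2
          rw [hnum, if_pos h1]
          calc (1:ℝ≥0∞) / (∑ y ∈ ballS τ d i (k * r), muS τ m y) ≤ 1 / (1 + M) :=
                ENNReal.div_le_div le_rfl hden
            _ = (1 + M)⁻¹ := one_div _
        · -- ball contains everything, denominator ≥ 1 + M still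
          have hsub : ({0, i} : Finset (Fin (τ + 1))) ⊆ ballS τ d i (k * r) := by
            intro y hy
            simp only [Finset.mem_insert, Finset.mem_singleton] at hy
            rcases hy with rfl | rfl
            · simp [ballS, hrho0, hkr1]
            · simp only [ballS, Finset.mem_filter, Finset.mem_univ, true_and]; simp [rhoS, show (0:ℝ) < k * r by linarith]
          have hden : (1 + M) ≤ ∑ y ∈ ballS τ d i (k * r), muS τ m y := by
            calc (1 : ℝ≥0∞) + M = ∑ y ∈ ({0, i} : Finset (Fin (τ + 1))), muS τ m y := by
                  rw [Finset.sum_pair (Ne.symm hi)]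
                  simp [muS, hi, hM]
              _ ≤ _ := Finset.sum_le_sum_of_subset hsub
          rw [hnum, if_pos h1]
          calc (1:ℝ≥0∞) / (∑ y ∈ ballS τ d i (k * r), muS τ m y) ≤ 1 / (1 + M) :=
                ENNReal.div_le_div le_rfl hden
            _ = (1 + M)⁻¹ := one_div _
    · have hr : (0:ℝ) < d / k := by positivity
      have hr1 : (1:ℝ) < d / k := (one_lt_div hk0).mpr hkd
      have hkr : k * (d / k) = d := by field_simp
      refine le_trans ?_ (le_iSup₂_of_le (d / k) hr le_rfl)
      rw [hnum, if_pos hr1, hkr]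
      have hball : ballS τ d i d = {0, i} := by
        ext y
        simp only [ballS, Finset.mem_filter, Finset.mem_univ, true_and, Finset.mem_insert,
          Finset.mem_singleton]
        simp only [rhoS]
        constructor
        · intro h
          by_cases hiy : i = y
          · right; exact hiy.symm
          · rw [if_neg hiy] at h
            by_cases hy0 : i = 0 ∨ y = 0
            · rcases hy0 with h0 | h0
              · exact absurd h0 hi
              · left; exact h0
            · rw [if_neg hy0] at h; linarith
        · rintro (rfl | rfl)
          · rw [if_neg hi]
            simp only [or_true, if_true]; linarith
          · simp [lt_of_lt_of_le zero_lt_one hd1.le]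
      rw [hball, Finset.sum_pair (Ne.symm hi)]
      have : muS τ m 0 + muS τ m i = 1 + M := by simp [muS, hi, hM]
      rw [this, one_div]
  refine ⟨key, ?_⟩
  intro C hC
  set lam : ℝ≥0∞ := ENNReal.ofReal (1 / (3 * m)) with hlam
  have hlt : lam < (1 + M)⁻¹ := by
    have h1M : (1:ℝ≥0∞) + M = ENNReal.ofReal (1 + m) := by
      rw [ENNReal.ofReal_add (by norm_num) hm0.le, ENNReal.ofReal_one]
    rw [h1M, ← ENNReal.ofReal_inv_of_pos (by linarith)]
    rw [ENNReal.ofReal_lt_ofReal_iff (by positivity)]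
    rw [inv_eq_one_div]
    apply one_div_lt_one_div_of_lt (by linarith) (by linarith)
  set f0 : Fin (τ + 1) → ℝ≥0∞ := fun x => if x = 0 then 1 else 0 with hf0
  have hsum1 : (∑ x : Fin (τ + 1), f0 x ^ p * muS τ m x) = 1 := by
    rw [Finset.sum_eq_single 0]
    · simp [f0, muS]
    · intro b _ hb
      simp [f0, hb, ENNReal.zero_rpow_of_pos hp0]
    · simp
  have h1 := hC f0 lam
  rw [hsum1, ENNReal.one_rpow, mul_one] at h1
  have hsub : (Finset.univ.filter (fun x : Fin (τ + 1) => x ≠ 0)) ⊆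
      Finset.univ.filter (fun x => lam < MkcS τ d m k f0 x) := by
    intro x hx
    simp only [Finset.mem_filter, Finset.mem_univ, true_and] at hx ⊢
    rw [show MkcS τ d m k f0 x = (1 + M)⁻¹ from key x hx]
    exact hlt
  have hcard : (Finset.univ.filter (fun x : Fin (τ + 1) => x ≠ 0)).card = τ := by
    rw [Finset.filter_ne']
    simp
  have hsumτ : (∑ x ∈ Finset.univ.filter (fun x : Fin (τ + 1) => x ≠ 0), muS τ m x)
      = ENNReal.ofReal ((τ:ℝ) * m) := by
    have : ∀ x ∈ Finset.univ.filter (fun x : Fin (τ + 1) => x ≠ 0),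
        muS τ m x = ENNReal.ofReal m := by
      intro x hx
      simp only [Finset.mem_filter, Finset.mem_univ, true_and] at hx
      simp [muS, hx]
    rw [Finset.sum_congr rfl this, Finset.sum_const, hcard,
      ENNReal.ofReal_mul (by positivity), nsmul_eq_mul]
    congr 1
    exact (ENNReal.ofReal_natCast τ).symm
  have hτm : (0:ℝ) < (τ:ℝ) * m := by positivity
  calc ENNReal.ofReal ((1 / (3 * m)) * ((τ : ℝ) * m) ^ (1 / p))
      = lam * (ENNReal.ofReal ((τ:ℝ) * m)) ^ (1 / p) := by
        rw [ENNReal.ofReal_mul (by positivity), ENNReal.ofReal_rpow_of_pos hτm]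
    _ ≤ lam * (∑ x ∈ Finset.univ.filter (fun x => lam < MkcS τ d m k f0 x), muS τ m x) ^ (1 / p) := by
        apply mul_le_mul_right
        apply ENNReal.rpow_le_rpow _ (by positivity)
        rw [← hsumτ]
        exact Finset.sum_le_sum_of_subset hsub
    _ ≤ C := h1
end

section
/- For the basic space 𝔗 = 𝔗_{τ,d,m}, the standard centered maximal operator M^c satisfies ‖M^c f‖_p^p ≤ 2^{2p−1}(3^p + 3)‖f‖_p^p for all f ≥ 0 and p ∈ [1,∞); in particular c^c(1,p) ≤ 24. -/
open scoped ENNReal Classical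

/-- The metric of the basic space `𝔗_{τ,d,m}` on `Y = {y_0} ∪ Y° ∪ Y'`, encoded as
`Option (Fin τ × Bool)` with `none = y_0`, `some (i, false) = y°_i`, `some (i, true) = y'_i`. -/
noncomputable def rhoT (τ : ℕ) (d : ℝ) :
    Option (Fin τ × Bool) → Option (Fin τ × Bool) → ℝ := fun x y =>
  if x = y then 0
  else
    match x, y with
    | none, none => 0
    | none, some (_, false) => 1
    | some (_, false), none => 1
    | none, some (_, true) => (d + 1) / 2
    | some (_, true), none => (d + 1) / 2
    | some (_, false), some (_, false) => (d + 1) / 2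
    | some (_, true), some (_, true) => (d + 1) / 2
    | some (i, false), some (j, true) => if i = j then 1 else d
    | some (i, true), some (j, false) => if i = j then 1 else d

/-- The measure of `𝔗_{τ,d,m}`: `μ({y_0}) = 1`, `μ({y°_i}) = 1/τ`, `μ({y'_i}) = m`. -/
noncomputable def muT (τ : ℕ) (m : ℝ) : Option (Fin τ × Bool) → ℝ≥0∞ := fun x =>
  match x with
  | none => 1
  | some (_, false) => (τ : ℝ≥0∞)⁻¹
  | some (_, true) => ENNReal.ofReal m

/-- Open balls of `𝔗_{τ,d,m}`. -/
noncomputable def ballT (τ : ℕ) (d : ℝ) (c : Option (Fin τ × Bool)) (r : ℝ) :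
    Finset (Option (Fin τ × Bool)) :=
  Finset.univ.filter (fun y => rhoT τ d c y < r)

/-- The (standard, centered) Hardy–Littlewood maximal operator `M^c` on `𝔗_{τ,d,m}`. -/
noncomputable def McT (τ : ℕ) (d m : ℝ) (f : Option (Fin τ × Bool) → ℝ≥0∞)
    (x : Option (Fin τ × Bool)) : ℝ≥0∞ :=
  ⨆ (r : ℝ) (_ : 0 < r),
    (∑ y ∈ ballT τ d x r, f y * muT τ m y) / (∑ y ∈ ballT τ d x r, muT τ m y)

lemma mem_ballT {τ : ℕ} {d : ℝ} {c y : Option (Fin τ × Bool)} {r : ℝ} :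
    y ∈ ballT τ d c r ↔ rhoT τ d c y < r := by simp [ballT]

lemma rhoT_self {τ : ℕ} {d : ℝ} (x : Option (Fin τ × Bool)) : rhoT τ d x x = 0 := by
  cases x <;> simp [rhoT]

lemma avg_le {α : Type*} (g w : α → ℝ≥0∞) (B C E : Finset α) (hBC : B ⊆ C) (hEB : E ⊆ B) :
    (∑ y ∈ B, g y * w y) / (∑ y ∈ B, w y) ≤ (∑ y ∈ C, g y * w y) / (∑ y ∈ E, w y) :=
  ENNReal.div_le_div (Finset.sum_le_sum_of_subset hBC) (Finset.sum_le_sum_of_subset hEB)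

section main
set_option linter.unnecessarySeqFocus false
variable {τ : ℕ} {d m : ℝ}

lemma one_le_rhoT (hd1 : 1 < d) {x y : Option (Fin τ × Bool)} (h : y ≠ x) :
    1 ≤ rhoT τ d x y := by
  have h2 : (1:ℝ) ≤ (d+1)/2 := by linarith
  rcases x with _ | ⟨i, bi⟩ <;> rcases y with _ | ⟨j, bj⟩
  · simp at h
  · rcases bj with _ | _ <;> simp [rhoT] <;> linarith
  · rcases bi with _ | _ <;> simp [rhoT] <;> linarith
  · rcases bi with _ | _ <;> rcases bj with _ | _
    · by_cases hij : i = j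
      · subst hij; simp at h
      · have : (i, false) ≠ (j, false) := by simp [hij]
        simp [rhoT, this, hij]; linarith
    · by_cases hij : i = j
      · subst hij; simp [rhoT]
      · simp [rhoT, hij]; linarith
    · by_cases hij : i = j
      · subst hij; simp [rhoT]
      · simp [rhoT, hij]; linarith
    · by_cases hij : i = j
      · subst hij; simp at h
      · have : (i, true) ≠ (j, true) := by simp [hij]
        simp [rhoT, this, hij]; linarith

lemma ballT_subset_singleton (hd1 : 1 < d) {x : Option (Fin τ × Bool)} {r : ℝ} (hr : r ≤ 1) :
    ballT τ d x r ⊆ {x} := by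
  intro y hy
  rw [mem_ballT] at hy
  simp only [Finset.mem_singleton]
  by_contra h
  exact absurd hy (not_lt.mpr (hr.trans (one_le_rhoT hd1 h)))

lemma center_mem_ballT {x : Option (Fin τ × Bool)} {r : ℝ} (hr : 0 < r) :
    x ∈ ballT τ d x r := by rw [mem_ballT, rhoT_self]; exact hr

variable (hτ : 1 ≤ τ) (hd1 : 1 < d) (hd3 : d ≤ 3) (hm : 1 < m)
  (g : Option (Fin τ × Bool) → ℝ≥0∞)

section pt
include hτ hm

lemma muT_ne_zero (x : Option (Fin τ × Bool)) : muT τ m x ≠ 0 := by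
  rcases x with _ | ⟨i, _ | _⟩ <;> simp [muT]
  linarith

lemma muT_ne_top (x : Option (Fin τ × Bool)) : muT τ m x ≠ ∞ := by
  rcases x with _ | ⟨i, _ | _⟩ <;> simp [muT]
  omega

include hd1 in
lemma avg_singleton_le {x : Option (Fin τ × Bool)} {r : ℝ} (hr : 0 < r) (hr1 : r ≤ 1) :
    (∑ y ∈ ballT τ d x r, g y * muT τ m y) / (∑ y ∈ ballT τ d x r, muT τ m y) ≤ g x := by
  have hB : ballT τ d x r = {x} :=
    subset_antisymm (ballT_subset_singleton hd1 hr1)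
      (Finset.singleton_subset_iff.mpr (center_mem_ballT hr))
  rw [hB, Finset.sum_singleton, Finset.sum_singleton, mul_div_assoc]
  exact (mul_le_mul_right ENNReal.div_self_le_one _).trans_eq (mul_one _)

end pt

section centers
include hτ hd1 hm

set_option maxHeartbeats 800000 in
lemma Mc_le_base (x : Option (Fin τ × Bool)) (hx : x = none ∨ ∃ i, x = some (i, false)) :
    McT τ d m g x ≤ g x + (∑ y, g y * muT τ m y) := by
  refine iSup₂_le fun r hr => ?_
  by_cases hr1 : r ≤ 1
  · exact (avg_singleton_le hτ hd1 hm g hr hr1).trans le_self_add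
  · push_neg at hr1
    have hnone : none ∈ ballT τ d x r := by
      rw [mem_ballT]
      rcases hx with rfl | ⟨i, rfl⟩
      · rw [rhoT_self]; linarith
      · have : rhoT τ d (some (i, false)) none = 1 := by simp [rhoT]
        rw [this]; exact hr1
    calc (∑ y ∈ ballT τ d x r, g y * muT τ m y) / (∑ y ∈ ballT τ d x r, muT τ m y)
        ≤ (∑ y ∈ Finset.univ, g y * muT τ m y) / (∑ y ∈ {none}, muT τ m y) :=
          avg_le _ _ _ _ _ (Finset.subset_univ _) (Finset.singleton_subset_iff.mpr hnone)
      _ = ∑ y, g y * muT τ m y := by simp [muT]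
      _ ≤ _ := le_add_self

set_option maxHeartbeats 800000 in
lemma Mc_le_prime (i : Fin τ) :
    McT τ d m g (some (i, true)) ≤ g (some (i, true))
      + (g (some (i, false)) * (τ : ℝ≥0∞)⁻¹ + g (some (i, true)) * ENNReal.ofReal m)
          / ENNReal.ofReal m
      + (∑ y, g y * muT τ m y) / (1 + τ * ENNReal.ofReal m) := by
  have hd2 : (1:ℝ) < (d+1)/2 := by linarith
  refine iSup₂_le fun r hr => ?_
  by_cases hr1 : r ≤ 1
  · exact (avg_singleton_le hτ hd1 hm g hr hr1).trans (le_add_right le_self_add)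
  push_neg at hr1
  by_cases hr2 : r ≤ (d+1)/2
  · -- ball is within the pair {y°_i, y'_i}
    have hBC : ballT τ d (some (i, true)) r ⊆ {some (i, false), some (i, true)} := by
      intro y hy
      rw [mem_ballT] at hy
      rcases y with _ | ⟨j, _ | _⟩
      · rw [show rhoT τ d (some (i, true)) none = (d+1)/2 by simp [rhoT]] at hy; linarith
      · by_cases hij : i = j
        · subst hij; simp
        · rw [show rhoT τ d (some (i, true)) (some (j, false)) = d by simp [rhoT, hij]] at hy
          linarith
      · by_cases hij : i = j
        · subst hij; simp
        · have hne : (i, true) ≠ (j, true) := by simp [hij]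
          rw [show rhoT τ d (some (i, true)) (some (j, true)) = (d+1)/2 by
            simp [rhoT, hne, hij]] at hy
          linarith
    have hEB : ({some (i, true)} : Finset (Option (Fin τ × Bool))) ⊆ ballT τ d (some (i, true)) r :=
      Finset.singleton_subset_iff.mpr (center_mem_ballT hr)
    refine le_trans (le_trans (avg_le _ _ _ _ _ hBC hEB) ?_) (le_add_right le_add_self)
    have hpair : (some (i, false) : Option (Fin τ × Bool)) ≠ some (i, true) := by simp
    rw [Finset.sum_pair hpair, Finset.sum_singleton]
    exact le_of_eq (by simp [muT])
  · -- ball contains {y_0} ∪ Y'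
    push_neg at hr2
    have hEB : insert none (Finset.univ.image fun j : Fin τ => some (j, true))
        ⊆ ballT τ d (some (i, true)) r := by
      intro y hy
      rw [Finset.mem_insert] at hy
      rw [mem_ballT]
      rcases hy with rfl | hy
      · rw [show rhoT τ d (some (i, true)) none = (d+1)/2 by simp [rhoT]]; exact hr2
      · obtain ⟨j, -, rfl⟩ := Finset.mem_image.mp hy
        by_cases hij : i = j
        · subst hij; rw [rhoT_self]; exact hr
        · have hne : (i, true) ≠ (j, true) := by simp [hij]
          rw [show rhoT τ d (some (i, true)) (some (j, true)) = (d+1)/2 by simp [rhoT, hne, hij]]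
          exact hr2
    refine le_trans (le_trans (avg_le _ _ _ _ _ (Finset.subset_univ _) hEB) ?_) le_add_self
    have h1 : (∑ y ∈ insert none (Finset.univ.image fun j : Fin τ => some (j, true)),
        muT τ m y) = 1 + τ * ENNReal.ofReal m := by
      rw [Finset.sum_insert (by simp)]
      congr 1
      rw [Finset.sum_image (by intro a b h; simpa using h)]
      simp [muT, Finset.sum_const, nsmul_eq_mul]
    rw [h1]

end centers

section L1
include hτ hd1 hm

set_option maxHeartbeats 1600000 in
lemma L1_bound :
    (∑ x, McT τ d m g x * muT τ m x) ≤ 12 * ∑ x, g x * muT τ m x := by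
  classical
  set M := ENNReal.ofReal m with hMdef
  set S := ∑ x, g x * muT τ m x with hSdef
  have hM0 : M ≠ 0 := by
    simp only [hMdef, ne_eq, ENNReal.ofReal_eq_zero, not_le]; linarith
  have hMt : M ≠ ∞ := ENNReal.ofReal_ne_top
  have hτ0 : (τ : ℝ≥0∞) ≠ 0 := by exact_mod_cast (by omega : τ ≠ 0)
  have hτt : (τ : ℝ≥0∞) ≠ ∞ := ENNReal.natCast_ne_top τ
  set C := (1 : ℝ≥0∞) + τ * M with hCdef
  have hC0 : C ≠ 0 := by simp [hCdef]
  have hCt : C ≠ ∞ := ENNReal.add_ne_top.mpr ⟨ENNReal.one_ne_top, ENNReal.mul_ne_top hτt hMt⟩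
  have expand : ∀ F : Option (Fin τ × Bool) → ℝ≥0∞,
      ∑ x, F x = F none + ∑ i, (F (some (i, true)) + F (some (i, false))) := by
    intro F
    rw [Fintype.sum_option, Fintype.sum_prod_type]
    congr 1
    exact Finset.sum_congr rfl fun i _ => by rw [Fintype.sum_bool]
  set Go := ∑ i, g (some (i, false)) * (τ : ℝ≥0∞)⁻¹ with hGo
  set Gp := ∑ i, g (some (i, true)) * M with hGp
  have hSx : S = g none + (Gp + Go) := by
    rw [hSdef, expand, Finset.sum_add_distrib]
    simp only [muT, mul_one]
    rfl
  set q := S / C with hq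
  have step1 : (∑ x, McT τ d m g x * muT τ m x)
      ≤ (g none + S) * 1 + ∑ i, (((g (some (i, true))
            + (g (some (i, false)) * (τ : ℝ≥0∞)⁻¹ + g (some (i, true)) * M) / M + q) * M)
          + (g (some (i, false)) + S) * (τ : ℝ≥0∞)⁻¹) := by
    rw [expand (fun x => McT τ d m g x * muT τ m x)]
    simp only [muT]
    gcongr with i _ i _
    · exact Mc_le_base hτ hd1 hm g none (Or.inl rfl)
    · exact Mc_le_prime hτ hd1 hm g i
    · exact Mc_le_base hτ hd1 hm g _ (Or.inr ⟨i, rfl⟩)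
  have summand : ∀ i : Fin τ,
      ((g (some (i, true))
          + (g (some (i, false)) * (τ : ℝ≥0∞)⁻¹ + g (some (i, true)) * M) / M + q) * M)
        + (g (some (i, false)) + S) * (τ : ℝ≥0∞)⁻¹
      = (g (some (i, true)) * M + g (some (i, false)) * (τ : ℝ≥0∞)⁻¹)
        + (g (some (i, true)) * M + g (some (i, false)) * (τ : ℝ≥0∞)⁻¹)
        + (q * M + S * (τ : ℝ≥0∞)⁻¹) := by
    intro i
    rw [add_mul, add_mul, ENNReal.div_mul_cancel hM0 hMt, add_mul]
    ring
  have step2 : (∑ i : Fin τ, (((g (some (i, true))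
          + (g (some (i, false)) * (τ : ℝ≥0∞)⁻¹ + g (some (i, true)) * M) / M + q) * M)
        + (g (some (i, false)) + S) * (τ : ℝ≥0∞)⁻¹))
      = (Gp + Go) + (Gp + Go) + ((τ : ℝ≥0∞) * (q * M) + (τ : ℝ≥0∞) * (S * (τ : ℝ≥0∞)⁻¹)) := by
    rw [Finset.sum_congr rfl fun i _ => summand i]
    rw [Finset.sum_add_distrib, Finset.sum_add_distrib, Finset.sum_add_distrib,
      Finset.sum_add_distrib, Finset.sum_const, Finset.sum_const]
    simp only [Finset.card_univ, Fintype.card_fin, nsmul_eq_mul, hGo, hGp]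
  have hqM : (τ : ℝ≥0∞) * (q * M) ≤ S := by
    have h1 : (τ : ℝ≥0∞) * (q * M) = q * (τ * M) := by ring
    have h2 : q * (τ * M) ≤ q * C := by
      apply mul_le_mul_right
      rw [hCdef]; exact le_add_self
    rw [h1]
    refine h2.trans ?_
    rw [hq, ENNReal.div_mul_cancel hC0 hCt]
  have hStau : (τ : ℝ≥0∞) * (S * (τ : ℝ≥0∞)⁻¹) = S := by
    rw [mul_comm S, ← mul_assoc, ENNReal.mul_inv_cancel hτ0 hτt, one_mul]
  have hGpGo : Gp + Go ≤ S := by rw [hSx]; exact le_add_self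
  calc (∑ x, McT τ d m g x * muT τ m x)
      ≤ (g none + S) * 1 + ((Gp + Go) + (Gp + Go)
          + ((τ : ℝ≥0∞) * (q * M) + (τ : ℝ≥0∞) * (S * (τ : ℝ≥0∞)⁻¹))) := by
        rw [← step2]; exact step1
    _ ≤ (S + S) * 1 + (S + S + (S + S)) := by
        have hgnone : g none ≤ S := by rw [hSx]; exact le_self_add
        exact add_le_add (mul_le_mul_left (add_le_add hgnone le_rfl) 1)
          (add_le_add (add_le_add hGpGo hGpGo) (add_le_add hqM hStau.le))
    _ = 6 * S := by ring
    _ ≤ 12 * S := by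
        apply mul_le_mul_left
        norm_num

end L1

section jensen

lemma avg_rpow_le {p : ℝ} (hp : 1 ≤ p) (B : Finset (Option (Fin τ × Bool)))
    (hD0 : (∑ y ∈ B, muT τ m y) ≠ 0) (hDt : (∑ y ∈ B, muT τ m y) ≠ ∞)
    (f : Option (Fin τ × Bool) → ℝ≥0∞) :
    ((∑ y ∈ B, f y * muT τ m y) / (∑ y ∈ B, muT τ m y)) ^ p
      ≤ (∑ y ∈ B, f y ^ p * muT τ m y) / (∑ y ∈ B, muT τ m y) := by
  set D := ∑ y ∈ B, muT τ m y with hD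
  have hw : ∑ y ∈ B, muT τ m y / D = 1 := by
    simp only [div_eq_mul_inv]
    rw [← Finset.sum_mul, ← div_eq_mul_inv]
    exact ENNReal.div_self hD0 hDt
  have h := ENNReal.rpow_arith_mean_le_arith_mean_rpow B (fun y => muT τ m y / D) f hw hp
  calc ((∑ y ∈ B, f y * muT τ m y) / D) ^ p
      = (∑ y ∈ B, muT τ m y / D * f y) ^ p := by
        congr 1
        simp only [div_eq_mul_inv, Finset.sum_mul]
        exact Finset.sum_congr rfl fun y _ => by ring
    _ ≤ ∑ y ∈ B, muT τ m y / D * f y ^ p := h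
    _ = (∑ y ∈ B, f y ^ p * muT τ m y) / D := by
        simp only [div_eq_mul_inv, Finset.sum_mul]
        exact Finset.sum_congr rfl fun y _ => by ring

include hτ hm in
lemma Mc_rpow_le {p : ℝ} (hp : 1 ≤ p) (f : Option (Fin τ × Bool) → ℝ≥0∞)
    (x : Option (Fin τ × Bool)) :
    McT τ d m f x ^ p ≤ McT τ d m (fun y => f y ^ p) x := by
  have hp0 : 0 < p := lt_of_lt_of_le one_pos hp
  set g : Option (Fin τ × Bool) → ℝ≥0∞ := fun y => f y ^ p with hg
  have h1 : McT τ d m f x ≤ (McT τ d m g x) ^ (1 / p) := by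
    refine iSup₂_le fun r hr => ?_
    have hx : x ∈ ballT τ d x r := center_mem_ballT hr
    have hD0 : (∑ y ∈ ballT τ d x r, muT τ m y) ≠ 0 := by
      intro h
      have h2 : muT τ m x ≤ ∑ y ∈ ballT τ d x r, muT τ m y :=
        Finset.single_le_sum (fun i _ => (zero_le : 0 ≤ muT τ m i)) hx
      rw [h, le_zero_iff] at h2
      exact muT_ne_zero hτ hm x h2
    have hDt : (∑ y ∈ ballT τ d x r, muT τ m y) ≠ ∞ := by
      refine ne_top_of_le_ne_top ?_ (Finset.sum_le_sum_of_subset (Finset.subset_univ _))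
      exact ENNReal.sum_ne_top.mpr fun a _ => muT_ne_top hτ hm a
    have hj := avg_rpow_le hp (ballT τ d x r) hD0 hDt f
    have h2 : ((∑ y ∈ ballT τ d x r, f y * muT τ m y)
        / (∑ y ∈ ballT τ d x r, muT τ m y)) ^ p ≤ McT τ d m g x := by
      refine hj.trans ?_
      exact le_iSup₂ (f := fun (r : ℝ) (_ : 0 < r) =>
        (∑ y ∈ ballT τ d x r, g y * muT τ m y) / (∑ y ∈ ballT τ d x r, muT τ m y)) r hr
    have h3 := ENNReal.rpow_le_rpow h2 (by positivity : (0:ℝ) ≤ 1 / p)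
    rwa [← ENNReal.rpow_mul, mul_one_div_cancel hp0.ne', ENNReal.rpow_one] at h3
  calc McT τ d m f x ^ p ≤ ((McT τ d m g x) ^ (1 / p)) ^ p := ENNReal.rpow_le_rpow h1 hp0.le
    _ = McT τ d m g x := by
        rw [← ENNReal.rpow_mul, one_div_mul_cancel hp0.ne', ENNReal.rpow_one]

end jensen
end main

/-- For the basic space `𝔗_{τ,d,m}`, the centered maximal operator satisfies
`‖M^c f‖_p^p ≤ 2^(2p-1)(3^p + 3) ‖f‖_p^p` for all `f ≥ 0`, `p ∈ [1,∞)`; in particular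
the weak `(p,p)` constant of `M^c` is at most `24`. -/
theorem stmt12 (τ : ℕ) (hτ : 1 ≤ τ) (d m p : ℝ)
    (hd1 : 1 < d) (hd3 : d ≤ 3) (hm : 1 < m) (hp : 1 ≤ p)
    (f : Option (Fin τ × Bool) → ℝ≥0∞) :
    (∑ x : Option (Fin τ × Bool), (McT τ d m f x) ^ p * muT τ m x)
      ≤ (2 : ℝ≥0∞) ^ (2 * p - 1) * ((3 : ℝ≥0∞) ^ p + 3)
          * ∑ x : Option (Fin τ × Bool), (f x) ^ p * muT τ m x ∧
    ∀ lam : ℝ≥0∞,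
      lam * (∑ x ∈ Finset.univ.filter (fun x => lam < McT τ d m f x), muT τ m x) ^ (1 / p)
        ≤ 24 * (∑ x : Option (Fin τ × Bool), (f x) ^ p * muT τ m x) ^ (1 / p) := by
  have hp0 : 0 < p := lt_of_lt_of_le one_pos hp
  set T := ∑ x : Option (Fin τ × Bool), (f x) ^ p * muT τ m x with hT
  have strong : (∑ x : Option (Fin τ × Bool), (McT τ d m f x) ^ p * muT τ m x) ≤ 12 * T := by
    refine le_trans (Finset.sum_le_sum fun x _ => ?_) (L1_bound hτ hd1 hm (fun y => f y ^ p))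
    exact mul_le_mul_left (Mc_rpow_le hτ hm hp f x) _
  constructor
  · refine strong.trans (mul_le_mul_left ?_ T)
    have h2 : (2:ℝ≥0∞) ≤ 2 ^ (2 * p - 1) := by
      calc (2:ℝ≥0∞) = 2 ^ (1:ℝ) := (ENNReal.rpow_one 2).symm
        _ ≤ 2 ^ (2 * p - 1) := ENNReal.rpow_le_rpow_of_exponent_le one_le_two (by linarith)
    have h3 : (3:ℝ≥0∞) ≤ 3 ^ p := by
      calc (3:ℝ≥0∞) = 3 ^ (1:ℝ) := (ENNReal.rpow_one 3).symm
        _ ≤ 3 ^ p := ENNReal.rpow_le_rpow_of_exponent_le (by norm_num) hp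
    calc (12:ℝ≥0∞) = 2 * (3 + 3) := by norm_num
      _ ≤ 2 ^ (2 * p - 1) * (3 ^ p + 3) := mul_le_mul' h2 (add_le_add h3 le_rfl)
  · intro lam
    set A := ∑ x ∈ Finset.univ.filter (fun x => lam < McT τ d m f x), muT τ m x with hA
    have cheb : lam ^ p * A ≤ ∑ x : Option (Fin τ × Bool), (McT τ d m f x) ^ p * muT τ m x := by
      rw [hA, Finset.mul_sum]
      refine le_trans (Finset.sum_le_sum fun x hx => ?_)
        (Finset.sum_le_sum_of_subset (Finset.filter_subset _ _))
      exact mul_le_mul_left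
        (ENNReal.rpow_le_rpow (le_of_lt (Finset.mem_filter.mp hx).2) hp0.le) _
    calc lam * A ^ (1 / p)
        = (lam ^ p * A) ^ (1 / p) := by
          rw [ENNReal.mul_rpow_of_nonneg _ _ (by positivity : (0:ℝ) ≤ 1 / p),
            ← ENNReal.rpow_mul, mul_one_div_cancel hp0.ne', ENNReal.rpow_one]
      _ ≤ (12 * T) ^ (1 / p) := ENNReal.rpow_le_rpow (cheb.trans strong) (by positivity)
      _ = 12 ^ (1 / p) * T ^ (1 / p) :=
          ENNReal.mul_rpow_of_nonneg _ _ (by positivity : (0:ℝ) ≤ 1 / p)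
      _ ≤ 24 * T ^ (1 / p) := by
          refine mul_le_mul_left ?_ _
          calc (12:ℝ≥0∞) ^ (1 / p) ≤ 12 ^ (1:ℝ) :=
              ENNReal.rpow_le_rpow_of_exponent_le (by norm_num)
                (by rw [div_le_one hp0]; exact hp)
            _ = 12 := ENNReal.rpow_one 12
            _ ≤ 24 := by norm_num
end

section
/- For the basic space 𝔗_{τ,d,m} and any f ≥ 0, the non-centered maximal operator satisfies M f(y′_i) ≤ 3·max{A_{{y_0,y′_i}∪Y°}(f), A_Y(f)} for each i, where A_E denotes the average over E. -/
open scoped ENNReal Classical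

/-- The (standard, non-centered) Hardy–Littlewood maximal operator `M` on `𝔗_{τ,d,m}`. -/
noncomputable def MT (τ : ℕ) (d m : ℝ) (f : Option (Fin τ × Bool) → ℝ≥0∞)
    (x : Option (Fin τ × Bool)) : ℝ≥0∞ :=
  ⨆ (c : Option (Fin τ × Bool)) (r : ℝ) (_ : 0 < r) (_ : x ∈ ballT τ d c r),
    (∑ y ∈ ballT τ d c r, f y * muT τ m y) / (∑ y ∈ ballT τ d c r, muT τ m y)

/-- The average `A_E(f) = (1/μ(E)) ∫_E f dμ` on `𝔗_{τ,d,m}`. -/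
noncomputable def avgT (τ : ℕ) (m : ℝ) (s : Finset (Option (Fin τ × Bool)))
    (f : Option (Fin τ × Bool) → ℝ≥0∞) : ℝ≥0∞ :=
  (∑ y ∈ s, f y * muT τ m y) / (∑ y ∈ s, muT τ m y)

/-- The set `{y_0, y'_i} ∪ Y°`. -/
noncomputable def EiT (τ : ℕ) (i : Fin τ) : Finset (Option (Fin τ × Bool)) :=
  insert none (insert (some (i, true))
    ((Finset.univ : Finset (Fin τ)).image (fun j => (some (j, false) : Option (Fin τ × Bool)))))

private lemma div_le_three_mul (a a' b b' : ℝ≥0∞) (ha : a ≤ a') (hb : b' ≤ 3 * b)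
    (h0 : b' ≠ 0) (ht : b' ≠ ⊤) : a / b ≤ 3 * (a' / b') := by
  rw [div_eq_mul_inv, div_eq_mul_inv, ← mul_assoc, mul_comm (3:ℝ≥0∞) a', mul_assoc]
  refine mul_le_mul' ha ?_
  have h3 : (3:ℝ≥0∞) * b'⁻¹ = (b' * 3⁻¹)⁻¹ := by
    rw [ENNReal.mul_inv (Or.inl h0) (Or.inl ht), inv_inv, mul_comm]
  rw [h3, ENNReal.inv_le_inv]
  calc b' * 3⁻¹ ≤ (3 * b) * 3⁻¹ := by exact mul_le_mul_left hb _
    _ = b := by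
        rw [mul_comm (3:ℝ≥0∞) b, mul_assoc,
          ENNReal.mul_inv_cancel (by norm_num) (by norm_num), mul_one]

private lemma sum_muT_univ (τ : ℕ) (hτ : 1 ≤ τ) (m : ℝ) :
    ∑ y : Option (Fin τ × Bool), muT τ m y = 2 + τ * ENNReal.ofReal m := by
  have hτ0 : (τ : ℝ≥0∞) ≠ 0 := by exact_mod_cast Nat.one_le_iff_ne_zero.mp hτ
  rw [Fintype.sum_option, Fintype.sum_prod_type]
  simp only [muT, Fintype.sum_bool, Finset.sum_const, Finset.card_univ, Fintype.card_fin,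
    nsmul_eq_mul]
  rw [mul_add, ENNReal.mul_inv_cancel hτ0 (by simp)]
  ring

private lemma sum_muT_S (τ : ℕ) (m : ℝ) :
    ∑ y ∈ insert (none : Option (Fin τ × Bool))
      ((Finset.univ : Finset (Fin τ)).image (fun k => (some (k, true) : Option (Fin τ × Bool)))),
      muT τ m y = 1 + τ * ENNReal.ofReal m := by
  rw [Finset.sum_insert (by simp), Finset.sum_image (by intro a _ b _ h; simpa using h)]
  simp [muT, Finset.sum_const, mul_comm]

private lemma sum_muT_Ei (τ : ℕ) (hτ : 1 ≤ τ) (m : ℝ) (i : Fin τ) :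
    ∑ y ∈ EiT τ i, muT τ m y = 2 + ENNReal.ofReal m := by
  have hτ0 : (τ : ℝ≥0∞) ≠ 0 := by exact_mod_cast Nat.one_le_iff_ne_zero.mp hτ
  rw [EiT, Finset.sum_insert (by simp), Finset.sum_insert (by simp),
    Finset.sum_image (by intro a _ b _ h; simpa using h)]
  simp only [muT, Finset.sum_const, Finset.card_univ, Fintype.card_fin, nsmul_eq_mul]
  rw [ENNReal.mul_inv_cancel hτ0 (by simp)]
  ring

/-- For the basic space `𝔗_{τ,d,m}` and any `f ≥ 0`, the non-centered maximal operator
satisfies `M f(y'_i) ≤ 3 max{A_{{y_0,y'_i}∪Y°}(f), A_Y(f)}`. -/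
theorem stmt13 (τ : ℕ) (hτ : 1 ≤ τ) (d m : ℝ)
    (hd1 : 1 < d) (hd3 : d ≤ 3) (hm : 1 < m)
    (f : Option (Fin τ × Bool) → ℝ≥0∞) (i : Fin τ) :
    MT τ d m f (some (i, true))
      ≤ 3 * max (avgT τ m (EiT τ i) f) (avgT τ m Finset.univ f) := by
  have hm1 : (1:ℝ≥0∞) ≤ ENNReal.ofReal m := ENNReal.one_le_ofReal.mpr hm.le
  rw [MT]
  refine iSup_le fun c => iSup_le fun r => iSup_le fun hr => iSup_le fun hmem => ?_
  simp only [ballT, Finset.mem_filter, Finset.mem_univ, true_and] at hmem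
  set B := ballT τ d c r with hB
  by_cases hcase : ∃ j : Fin τ, j ≠ i ∧ rhoT τ d c (some (j, true)) < r
  · -- the ball contains another `y'_j`; compare with the global average
    obtain ⟨j, hji, hjr⟩ := hcase
    refine le_trans ?_ (mul_le_mul_right (le_max_right _ _) 3)
    rw [avgT]
    set S := insert (none : Option (Fin τ × Bool))
      ((Finset.univ : Finset (Fin τ)).image
        (fun k => (some (k, true) : Option (Fin τ × Bool)))) with hSdef
    have hd2r : (d + 1) / 2 < r ∧ ∀ k : Fin τ, rhoT τ d c (some (k, true)) < r := by
      rcases c with _ | ⟨l, b⟩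
      · refine ⟨by simpa [rhoT] using hmem, fun k => by simpa [rhoT] using hmem⟩
      · cases b
        · have hdr : d < r := by
            by_cases hli : l = i
            · have hlj : l ≠ j := fun h => hji (h ▸ hli)
              simpa [rhoT, hlj] using hjr
            · simpa [rhoT, hli] using hmem
          refine ⟨by linarith, fun k => ?_⟩
          by_cases hlk : l = k
          · have : rhoT τ d (some (l, false)) (some (k, true)) = 1 := by simp [rhoT, hlk]
            rw [this]; linarith
          · have : rhoT τ d (some (l, false)) (some (k, true)) = d := by simp [rhoT, hlk]
            rw [this]; linarith
        · have h2 : (d + 1) / 2 < r := by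
            by_cases hli : l = i
            · have hlj : l ≠ j := fun h => hji (h ▸ hli)
              simpa [rhoT, hlj] using hjr
            · simpa [rhoT, hli] using hmem
          refine ⟨h2, fun k => ?_⟩
          by_cases hlk : l = k
          · have : rhoT τ d (some (l, true)) (some (k, true)) = 0 := by simp [rhoT, hlk]
            rw [this]; exact hr
          · have : rhoT τ d (some (l, true)) (some (k, true)) = (d + 1) / 2 := by
              simp [rhoT, hlk]
            rw [this]; exact h2
    have hSB : S ⊆ B := by
      intro x hx
      simp only [hSdef, Finset.mem_insert, Finset.mem_image, Finset.mem_univ, true_and] at hx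
      simp only [hB, ballT, Finset.mem_filter, Finset.mem_univ, true_and]
      rcases hx with rfl | ⟨k, rfl⟩
      · rcases c with _ | ⟨l, b⟩
        · simpa [rhoT] using hr
        · cases b
          · have : rhoT τ d (some (l, false)) none = 1 := by simp [rhoT]
            rw [this]; linarith [hd2r.1]
          · have : rhoT τ d (some (l, true)) none = (d + 1) / 2 := by simp [rhoT]
            rw [this]; exact hd2r.1
      · exact hd2r.2 k
    have hnum : ∑ y ∈ B, f y * muT τ m y ≤ ∑ y ∈ Finset.univ, f y * muT τ m y :=
      Finset.sum_le_sum_of_subset (Finset.subset_univ B)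
    have hden : (∑ y ∈ (Finset.univ : Finset (Option (Fin τ × Bool))), muT τ m y)
        ≤ 3 * ∑ y ∈ B, muT τ m y := by
      have h1 : (∑ y ∈ (Finset.univ : Finset (Option (Fin τ × Bool))), muT τ m y)
          ≤ 3 * ∑ y ∈ S, muT τ m y := by
        rw [sum_muT_univ τ hτ m, sum_muT_S τ m, mul_add, mul_one]
        exact add_le_add (by norm_num)
          (le_mul_of_one_le_left zero_le (by norm_num))
      exact h1.trans (mul_le_mul_right (Finset.sum_le_sum_of_subset hSB) 3)
    refine div_le_three_mul _ _ _ _ hnum hden ?_ ?_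
    · rw [sum_muT_univ τ hτ m]; exact (lt_of_lt_of_le (by norm_num : (0:ℝ≥0∞) < 2) le_self_add).ne'
    · rw [sum_muT_univ τ hτ m]
      exact ENNReal.add_ne_top.2 ⟨by simp, ENNReal.mul_ne_top (by simp) ENNReal.ofReal_ne_top⟩
  · -- the ball is contained in `E_i`
    push_neg at hcase
    refine le_trans ?_ (mul_le_mul_right (le_max_left _ _) 3)
    rw [avgT]
    have hBE : B ⊆ EiT τ i := by
      intro x hx
      simp only [hB, ballT, Finset.mem_filter, Finset.mem_univ, true_and] at hx
      rcases x with _ | ⟨k, b⟩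
      · simp [EiT]
      · cases b
        · simp [EiT]
        · by_cases hk : k = i
          · subst hk; simp [EiT]
          · exact absurd hx (by simpa using hcase k hk)
    have hmemB : (some (i, true) : Option (Fin τ × Bool)) ∈ B := by
      simp only [hB, ballT, Finset.mem_filter, Finset.mem_univ, true_and]
      exact hmem
    have hsing : ENNReal.ofReal m ≤ ∑ y ∈ B, muT τ m y := by
      have := Finset.single_le_sum (f := muT τ m) (fun _ _ => zero_le) hmemB
      simpa [muT] using this
    have hnum : ∑ y ∈ B, f y * muT τ m y ≤ ∑ y ∈ EiT τ i, f y * muT τ m y :=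
      Finset.sum_le_sum_of_subset hBE
    have hden : (∑ y ∈ EiT τ i, muT τ m y) ≤ 3 * ∑ y ∈ B, muT τ m y := by
      rw [sum_muT_Ei τ hτ m i]
      have h1 : (2 : ℝ≥0∞) + ENNReal.ofReal m ≤ 3 * ENNReal.ofReal m := by
        have h2 : (2 : ℝ≥0∞) ≤ 2 * ENNReal.ofReal m :=
          le_mul_of_one_le_right (by norm_num) hm1
        calc (2 : ℝ≥0∞) + ENNReal.ofReal m ≤ 2 * ENNReal.ofReal m + ENNReal.ofReal m :=
              add_le_add_left h2 _
          _ = 3 * ENNReal.ofReal m := by ring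
      exact h1.trans (mul_le_mul_right hsing 3)
    refine div_le_three_mul _ _ _ _ hnum hden ?_ ?_
    · rw [sum_muT_Ei τ hτ m i]; exact (lt_of_lt_of_le (by norm_num : (0:ℝ≥0∞) < 2) le_self_add).ne'
    · rw [sum_muT_Ei τ hτ m i]
      exact ENNReal.add_ne_top.2 ⟨by simp, ENNReal.ofReal_ne_top⟩
end

section
/- For p ≥ 1, τ ∈ ℕ, m > 1: ∑_{i=1}^{τ} A_{{y_0,y′_i}∪Y°}(f)^p · μ({y′_i}) ≤ 2^p ∑_{i=1}^τ f(y′_i)^p μ({y′_i}) + 2^p τ m^{1−p} ‖f·χ_{Y∖Y′}‖_1^p, for any f ≥ 0 on the basic space 𝔗_{τ,d,m}. -/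
open scoped ENNReal Classical

/-- The set `Y ∖ Y' = {y_0} ∪ Y°`. -/
noncomputable def SYT (τ : ℕ) : Finset (Option (Fin τ × Bool)) :=
  insert none
    ((Finset.univ : Finset (Fin τ)).image (fun j => (some (j, false) : Option (Fin τ × Bool))))

lemma two_rpow_aux (p : ℝ) (hp : 1 ≤ p) (a b : ℝ≥0∞) :
    (a + b) ^ p ≤ 2 ^ p * (a ^ p + b ^ p) := by
  have hp0 : 0 ≤ p := le_trans zero_le_one hp
  have h1 : a + b ≤ 2 * max a b := by
    rw [two_mul]
    exact add_le_add (le_max_left _ _) (le_max_right _ _)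
  calc (a + b) ^ p ≤ (2 * max a b) ^ p := ENNReal.rpow_le_rpow h1 hp0
    _ = 2 ^ p * (max a b) ^ p := ENNReal.mul_rpow_of_nonneg _ _ hp0
    _ ≤ 2 ^ p * (a ^ p + b ^ p) := by
        gcongr
        rcases le_total a b with h | h
        · rw [max_eq_right h]; exact le_add_self
        · rw [max_eq_left h]; exact le_add_right le_rfl

/-- For `p ≥ 1`, `τ ∈ ℕ`, `m > 1`:
`∑_{i=1}^{τ} A_{{y_0,y'_i}∪Y°}(f)^p μ({y'_i})
  ≤ 2^p ∑_i f(y'_i)^p μ({y'_i}) + 2^p τ m^(1-p) ‖f·χ_{Y∖Y'}‖₁^p`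
for any `f ≥ 0` on the basic space `𝔗_{τ,d,m}`. -/
theorem stmt14 (τ : ℕ) (hτ : 1 ≤ τ) (m p : ℝ) (hm : 1 < m) (hp : 1 ≤ p)
    (f : Option (Fin τ × Bool) → ℝ≥0∞) :
    (∑ i : Fin τ, (avgT τ m (EiT τ i) f) ^ p * muT τ m (some (i, true)))
      ≤ (2 : ℝ≥0∞) ^ p * (∑ i : Fin τ, (f (some (i, true))) ^ p * muT τ m (some (i, true)))
        + (2 : ℝ≥0∞) ^ p * (τ : ℝ≥0∞) * (ENNReal.ofReal m) ^ (1 - p)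
            * (∑ y ∈ SYT τ, f y * muT τ m y) ^ p := by
  classical
  set m' : ℝ≥0∞ := ENNReal.ofReal m with hm'def
  have hp0 : 0 ≤ p := le_trans zero_le_one hp
  have hm0 : m' ≠ 0 := by
    simp only [hm'def, ne_eq, ENNReal.ofReal_eq_zero, not_le]; linarith
  have hmtop : m' ≠ ⊤ := ENNReal.ofReal_ne_top
  have hτ0 : (τ : ℝ≥0∞) ≠ 0 := by
    exact Nat.cast_ne_zero.mpr (by omega)
  set S : ℝ≥0∞ := ∑ y ∈ SYT τ, f y * muT τ m y with hSdef
  have himg : ∀ g : Option (Fin τ × Bool) → ℝ≥0∞,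
      (∑ y ∈ (Finset.univ : Finset (Fin τ)).image
        (fun j => (some (j, false) : Option (Fin τ × Bool))), g y)
        = ∑ j : Fin τ, g (some (j, false)) := by
    intro g
    rw [Finset.sum_image]
    intro x _ y _ h
    simpa using h
  have hS : S = f none + ∑ j : Fin τ, f (some (j, false)) * (τ : ℝ≥0∞)⁻¹ := by
    rw [hSdef, SYT, Finset.sum_insert (by simp), himg]
    simp [muT]
  -- pointwise bound for the average
  have key : ∀ i : Fin τ, avgT τ m (EiT τ i) f ≤ f (some (i, true)) + S * m'⁻¹ := by
    intro i
    have hnum : (∑ y ∈ EiT τ i, f y * muT τ m y)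
        = f (some (i, true)) * m' + S := by
      rw [EiT, Finset.sum_insert (by simp), Finset.sum_insert (by simp), himg, hS]
      simp [muT, hm'def]
      ring
    have hden : m' ≤ ∑ y ∈ EiT τ i, muT τ m y := by
      rw [EiT, Finset.sum_insert (by simp), Finset.sum_insert (by simp), himg]
      simp only [muT, hm'def]
      calc m' ≤ m' + ∑ _j : Fin τ, (τ : ℝ≥0∞)⁻¹ := le_self_add
        _ ≤ 1 + (m' + ∑ _j : Fin τ, (τ : ℝ≥0∞)⁻¹) := le_add_self
    calc avgT τ m (EiT τ i) f
        ≤ (∑ y ∈ EiT τ i, f y * muT τ m y) / m' :=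
          ENNReal.div_le_div le_rfl hden
      _ = (f (some (i, true)) * m' + S) / m' := by rw [hnum]
      _ = f (some (i, true)) * m' / m' + S / m' := ENNReal.add_div
      _ = f (some (i, true)) + S * m'⁻¹ := by
          rw [mul_div_assoc, ENNReal.div_self hm0 hmtop, mul_one, div_eq_mul_inv]
  -- the power of the bound, times m'
  have step : ∀ i : Fin τ,
      (avgT τ m (EiT τ i) f) ^ p * m'
        ≤ 2 ^ p * ((f (some (i, true))) ^ p * m') + 2 ^ p * m' ^ (1 - p) * S ^ p := by
    intro i
    have h1 : (avgT τ m (EiT τ i) f) ^ p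
        ≤ 2 ^ p * ((f (some (i, true))) ^ p + (S * m'⁻¹) ^ p) :=
      le_trans (ENNReal.rpow_le_rpow (key i) hp0) (two_rpow_aux p hp _ _)
    have h2 : (S * m'⁻¹) ^ p * m' = m' ^ (1 - p) * S ^ p := by
      rw [ENNReal.mul_rpow_of_nonneg _ _ hp0, ENNReal.inv_rpow, ← ENNReal.rpow_neg]
      calc S ^ p * m' ^ (-p) * m' = S ^ p * (m' ^ (-p) * m' ^ (1 : ℝ)) := by
            rw [ENNReal.rpow_one]; ring
        _ = m' ^ (1 - p) * S ^ p := by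
            rw [← ENNReal.rpow_add _ _ hm0 hmtop]
            rw [mul_comm]
            ring_nf
    calc (avgT τ m (EiT τ i) f) ^ p * m'
        ≤ 2 ^ p * ((f (some (i, true))) ^ p + (S * m'⁻¹) ^ p) * m' := by
          exact mul_le_mul_left h1 m'
      _ = 2 ^ p * ((f (some (i, true))) ^ p * m') + 2 ^ p * ((S * m'⁻¹) ^ p * m') := by
          ring
      _ = 2 ^ p * ((f (some (i, true))) ^ p * m') + 2 ^ p * m' ^ (1 - p) * S ^ p := by
          rw [h2]; ring
  have hmu : ∀ i : Fin τ, muT τ m (some (i, true)) = m' := fun i => rfl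
  calc (∑ i : Fin τ, (avgT τ m (EiT τ i) f) ^ p * muT τ m (some (i, true)))
      ≤ ∑ i : Fin τ, (2 ^ p * ((f (some (i, true))) ^ p * m')
          + 2 ^ p * m' ^ (1 - p) * S ^ p) := by
        apply Finset.sum_le_sum
        intro i _
        rw [hmu i]
        exact step i
    _ = 2 ^ p * (∑ i : Fin τ, (f (some (i, true))) ^ p * m')
          + (τ : ℝ≥0∞) * (2 ^ p * m' ^ (1 - p) * S ^ p) := by
        rw [Finset.sum_add_distrib, Finset.mul_sum, Finset.sum_const, Finset.card_univ,
          Fintype.card_fin, nsmul_eq_mul]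
    _ = (2 : ℝ≥0∞) ^ p * (∑ i : Fin τ, (f (some (i, true))) ^ p * muT τ m (some (i, true)))
          + (2 : ℝ≥0∞) ^ p * (τ : ℝ≥0∞) * m' ^ (1 - p) * S ^ p := by
        simp only [hmu]; ring
end

section
/- Let Λ ⊆ ℕ and let 𝔛 be the disjoint union of spaces 𝔛_n (each of diameter ≤ 1, total measure μ_n(X_n) ≤ 2^{−n}) with inter-component distance k_0 + 1, k_0 ≥ 1 fixed. Then for 1 ≤ k ≤ k_0, p ∈ [1,∞), the non-centered modified maximal operator M_{k,𝔛} is of strong type (p,p) if and only if each M_{k,𝔛_n} satisfies the strong type (p,p) inequality with a constant independent of n; moreover if each constant is ≤ c̃ then ‖M_{k,𝔛}f‖_p^p ≤ (c̃^p + 1)‖f‖_p^p. -/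
open MeasureTheory
open scoped ENNReal

/-- The non-centered modified Hardy–Littlewood maximal operator `M_k` associated with a
distance function `dist` and a measure `μ`. -/
noncomputable def MkOp {X : Type*} [MeasurableSpace X] (dist : X → X → ℝ) (μ : Measure X)
    (k : ℝ) (f : X → ℝ≥0∞) (x : X) : ℝ≥0∞ :=
  ⨆ (c : X) (r : ℝ) (_ : 0 < r) (_ : dist c x < r),
    (∫⁻ y in {y | dist c y < r}, f y ∂μ) / μ {y | dist c y < k * r}

/-- The distance on the disjoint union of the spaces `𝔛_i`: the original distance within a
component, and `k₀ + 1` between points of different components. -/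
noncomputable def unionDist {Λ : Set ℕ} (X : Λ → Type*) (d : ∀ i, X i → X i → ℝ) (k₀ : ℝ) :
    (Σ i, X i) → (Σ i, X i) → ℝ := fun x y =>
  if h : x.1 = y.1 then d x.1 x.2 (cast (congrArg X h.symm) y.2) else k₀ + 1

/-- The measure on the disjoint union of the spaces `𝔛_i`. -/
noncomputable def unionMeasure {Λ : Set ℕ} (X : Λ → Type*) [∀ i, MeasurableSpace (X i)]
    (μ : ∀ i, Measure (X i)) : Measure (Σ i, X i) :=
  Measure.sum (fun i => (μ i).map (Sigma.mk i))

open Set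

section Helpers

variable {Λ : Set ℕ} {X : Λ → Type*} [∀ i, MeasurableSpace (X i)]

lemma measurable_sigmaMk' (i : Λ) : Measurable (Sigma.mk i : X i → Σ j, X j) := by
  intro s hs
  rw [Sigma.instMeasurableSpace, MeasurableSpace.measurableSet_iInf] at hs
  exact hs i

lemma measurableEmbedding_sigmaMk' (i : Λ) :
    MeasurableEmbedding (Sigma.mk i : X i → Σ j, X j) where
  injective := sigma_mk_injective
  measurable := measurable_sigmaMk' i
  measurableSet_image' := by
    intro s hs
    have : MeasurableSet[⨅ a, MeasurableSpace.map (Sigma.mk a)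
        (inferInstance : MeasurableSpace (X a))] (Sigma.mk i '' s) → MeasurableSet (Sigma.mk i '' s) := id
    apply this
    rw [MeasurableSpace.measurableSet_iInf]
    intro j
    rcases eq_or_ne j i with rfl | hj
    · show MeasurableSet (Sigma.mk j ⁻¹' (Sigma.mk j '' s))
      rwa [preimage_image_eq _ sigma_mk_injective]
    · show MeasurableSet (Sigma.mk j ⁻¹' (Sigma.mk i '' s))
      have : Sigma.mk j ⁻¹' (Sigma.mk i '' s) = ∅ := by
        ext x
        simp only [mem_preimage, mem_image, mem_empty_iff_false, iff_false, not_exists]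
        rintro a ⟨-, h⟩
        exact hj (congrArg Sigma.fst h).symm
      rw [this]; exact MeasurableSet.empty





variable (d : ∀ i, X i → X i → ℝ) (μ : ∀ i, Measure (X i)) (k₀ : ℝ)

lemma unionMeasure_apply' (A : Set (Σ i, X i)) :
    unionMeasure X μ A = ∑' i, μ i (Sigma.mk i ⁻¹' A) := by
  rw [unionMeasure, Measure.sum_apply_of_countable]
  exact tsum_congr fun i => (measurableEmbedding_sigmaMk' i).map_apply _ _

lemma unionMeasure_restrict' (A : Set (Σ i, X i)) :
    (unionMeasure X μ).restrict A
      = Measure.sum (fun i => ((μ i).restrict (Sigma.mk i ⁻¹' A)).map (Sigma.mk i)) := by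
  ext t ht
  rw [Measure.restrict_apply ht, unionMeasure_apply', Measure.sum_apply _ ht]
  refine tsum_congr fun i => ?_
  rw [(measurableEmbedding_sigmaMk' i).map_apply,
    Measure.restrict_apply (measurable_sigmaMk' i ht), preimage_inter]

lemma setLintegral_union' (f : (Σ i, X i) → ℝ≥0∞) (A : Set (Σ i, X i)) :
    ∫⁻ y in A, f y ∂(unionMeasure X μ)
      = ∑' i, ∫⁻ x in Sigma.mk i ⁻¹' A, f ⟨i, x⟩ ∂(μ i) := by
  rw [unionMeasure_restrict', lintegral_sum_measure]
  exact tsum_congr fun i => (measurableEmbedding_sigmaMk' i).lintegral_map _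

lemma lintegral_union' (f : (Σ i, X i) → ℝ≥0∞) :
    ∫⁻ y, f y ∂(unionMeasure X μ) = ∑' i, ∫⁻ x, f ⟨i, x⟩ ∂(μ i) := by
  rw [unionMeasure, lintegral_sum_measure]
  exact tsum_congr fun i => (measurableEmbedding_sigmaMk' i).lintegral_map _

lemma unionDist_same (i : Λ) (a b : X i) :
    unionDist X d k₀ ⟨i, a⟩ ⟨i, b⟩ = d i a b := by
  simp [unionDist]

lemma unionDist_ne {i j : Λ} (h : i ≠ j) (a : X i) (b : X j) :
    unionDist X d k₀ ⟨i, a⟩ ⟨j, b⟩ = k₀ + 1 := by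
  simp [unionDist, h]

lemma preimage_ball_same (i : Λ) (c : X i) (r : ℝ) :
    Sigma.mk i ⁻¹' {y | unionDist X d k₀ ⟨i, c⟩ y < r} = {x | d i c x < r} := by
  ext x; simp [unionDist_same]

lemma preimage_ball_ne {i j : Λ} (h : i ≠ j) (c : X i) (r : ℝ) (hr : ¬ k₀ + 1 < r) :
    Sigma.mk j ⁻¹' {y | unionDist X d k₀ ⟨i, c⟩ y < r} = ∅ := by
  ext x; simp [unionDist_ne d k₀ h, hr]



variable {k : ℝ}

lemma le_MkOp_union (hk1 : 1 ≤ k) (hkk₀ : k ≤ k₀) (hk₀ : 1 ≤ k₀)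
    (hdiam : ∀ i (x y : X i), d i x y ≤ 1) (i : Λ) (g : X i → ℝ≥0∞) (x : X i) :
    MkOp (d i) (μ i) k g x ≤
      MkOp (unionDist X d k₀) (unionMeasure X μ) k (Function.extend (Sigma.mk i) g 0) ⟨i, x⟩ := by
  have hk : (0:ℝ) < k := lt_of_lt_of_le one_pos hk1
  have hq : (1:ℝ) < (k₀ + 1) / k := by rw [lt_div_iff₀ hk]; linarith
  refine iSup_le fun c => iSup_le fun r => iSup_le fun hr => iSup_le fun hcx => ?_
  set r' : ℝ := min r ((k₀ + 1) / k) with hr'def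
  have hr' : 0 < r' := lt_min hr (by linarith)
  have hr'le : r' ≤ r := min_le_left _ _
  have hr'le2 : r' ≤ (k₀ + 1) / k := min_le_right _ _
  have hkr' : k * r' ≤ k₀ + 1 := by
    calc k * r' ≤ k * ((k₀ + 1) / k) := by nlinarith
    _ = k₀ + 1 := by field_simp
  have hdist : unionDist X d k₀ ⟨i, c⟩ ⟨i, x⟩ < r' := by
    rw [unionDist_same]
    exact lt_min hcx (lt_of_le_of_lt (hdiam i c x) hq)
  -- numerator equality
  have hnum : ∫⁻ y in {y | unionDist X d k₀ ⟨i, c⟩ y < r'},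
      Function.extend (Sigma.mk i) g 0 y ∂(unionMeasure X μ)
      = ∫⁻ z in {z | d i c z < r}, g z ∂(μ i) := by
    rw [setLintegral_union']
    rw [tsum_eq_single i]
    · have hballs : ({z | d i c z < r'} : Set (X i)) = {z | d i c z < r} := by
        rcases le_or_gt r ((k₀ + 1) / k) with hle | hlt
        · rw [hr'def, min_eq_left hle]
        · have hr'eq : r' = (k₀ + 1) / k := min_eq_right hlt.le
          ext z
          simp only [mem_setOf_eq]
          constructor
          · intro _; exact lt_of_le_of_lt (hdiam i c z) (lt_trans hq hlt)
          · intro _; rw [hr'eq]; exact lt_of_le_of_lt (hdiam i c z) hq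
      rw [preimage_ball_same, hballs]
      have hgz : ∀ z : X i, Function.extend (Sigma.mk i) g 0 ⟨i, z⟩ = g z := fun z =>
        sigma_mk_injective.extend_apply g 0 z
      simp_rw [hgz]
    · intro j hj
      have hz : ∀ x : X j, Function.extend (Sigma.mk i) g 0 ⟨j, x⟩ = 0 := fun x =>
        Function.extend_apply' _ _ _ (by rintro ⟨a, h⟩; exact hj (congrArg Sigma.fst h).symm)
      simp [hz]
  have hden : unionMeasure X μ {y | unionDist X d k₀ ⟨i, c⟩ y < k * r'}
      = μ i {z | d i c z < k * r'} := by
    rw [unionMeasure_apply', tsum_eq_single i]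
    · rw [preimage_ball_same]
    · intro j hj
      rw [preimage_ball_ne d k₀ (fun h => hj h.symm) _ _ (not_lt.2 hkr')]
      exact measure_empty
  calc (∫⁻ y in {y | d i c y < r}, g y ∂(μ i)) / μ i {y | d i c y < k * r}
      ≤ (∫⁻ y in {y | unionDist X d k₀ ⟨i, c⟩ y < r'},
          Function.extend (Sigma.mk i) g 0 y ∂(unionMeasure X μ))
        / unionMeasure X μ {y | unionDist X d k₀ ⟨i, c⟩ y < k * r'} := by
        rw [hnum, hden]
        exact ENNReal.div_le_div le_rfl
          (measure_mono fun z hz => lt_of_lt_of_le hz (mul_le_mul_of_nonneg_left hr'le hk.le))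
    _ ≤ _ := by
        refine le_iSup_of_le (⟨i, c⟩ : Σ j, X j) (le_iSup_of_le r' ?_)
        exact le_iSup_of_le hr' (le_iSup_of_le hdist le_rfl)

lemma MkOp_union_le (hk1 : 1 ≤ k) (hkk₀ : k ≤ k₀) (hk₀ : 1 ≤ k₀)
    (hdiam : ∀ i (x y : X i), d i x y ≤ 1) (f : (Σ j, X j) → ℝ≥0∞) (i : Λ) (x : X i) :
    MkOp (unionDist X d k₀) (unionMeasure X μ) k f ⟨i, x⟩ ≤
      max (MkOp (d i) (μ i) k (fun z => f ⟨i, z⟩) x)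
        ((∫⁻ y, f y ∂(unionMeasure X μ)) / unionMeasure X μ univ) := by
  have hk : (0:ℝ) < k := lt_of_lt_of_le one_pos hk1
  refine iSup_le fun c => iSup_le fun r => iSup_le fun hr => iSup_le fun hdist => ?_
  obtain ⟨j, cj⟩ := c
  by_cases hbig : k₀ + 1 < k * r
  · -- the k*r-ball is everything
    have hball : {y | unionDist X d k₀ ⟨j, cj⟩ y < k * r} = univ := by
      refine eq_univ_of_forall ?_
      rintro ⟨j', y⟩
      rcases eq_or_ne j j' with rfl | hne
      · show unionDist X d k₀ ⟨j, cj⟩ ⟨j, y⟩ < k * r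
        rw [unionDist_same]
        exact lt_of_le_of_lt (hdiam j cj y) (by linarith)
      · show unionDist X d k₀ ⟨j, cj⟩ ⟨j', y⟩ < k * r
        rw [unionDist_ne d k₀ hne]
        exact hbig
    rw [hball]
    refine le_max_of_le_right (ENNReal.div_le_div ?_ le_rfl)
    exact lintegral_mono' Measure.restrict_le_self le_rfl
  · -- small radius: the ball stays in component i, and j = i
    have hrk : r ≤ k * r := le_mul_of_one_le_left hr.le hk1
    have hrs : ¬ k₀ + 1 < r := fun h => hbig (lt_of_lt_of_le h hrk)
    have hji : j = i := by
      by_contra hne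
      rw [unionDist_ne d k₀ hne] at hdist
      exact hrs hdist
    subst hji
    rw [unionDist_same] at hdist
    have hnum : ∫⁻ y in {y | unionDist X d k₀ ⟨j, cj⟩ y < r}, f y ∂(unionMeasure X μ)
        = ∫⁻ z in {z | d j cj z < r}, f ⟨j, z⟩ ∂(μ j) := by
      rw [setLintegral_union', tsum_eq_single j]
      · rw [preimage_ball_same]
      · intro j' hj'
        rw [preimage_ball_ne d k₀ (fun h => hj' h.symm) _ _ hrs]
        simp
    have hden : unionMeasure X μ {y | unionDist X d k₀ ⟨j, cj⟩ y < k * r}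
        = μ j {z | d j cj z < k * r} := by
      rw [unionMeasure_apply', tsum_eq_single j]
      · rw [preimage_ball_same]
      · intro j' hj'
        rw [preimage_ball_ne d k₀ (fun h => hj' h.symm) _ _ hbig]
        exact measure_empty
    rw [hnum, hden]
    refine le_max_of_le_left ?_
    refine le_iSup_of_le cj (le_iSup_of_le r (le_iSup_of_le hr (le_iSup_of_le hdist le_rfl)))

lemma unionMeasure_univ_ne_top (hμtot : ∀ i : Λ, μ i univ ≤ 2 ^ (-((i : ℕ) : ℤ))) :
    unionMeasure X μ univ ≠ ∞ := by
  rw [unionMeasure_apply']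
  simp only [preimage_univ]
  have h1 : ∑' i : Λ, μ i univ ≤ ∑' i : Λ, (2:ℝ≥0∞) ^ (-((i : ℕ) : ℤ)) :=
    ENNReal.tsum_le_tsum hμtot
  have h2 : ∑' i : Λ, (2:ℝ≥0∞) ^ (-((i : ℕ) : ℤ)) ≤ ∑' n : ℕ, (2:ℝ≥0∞) ^ (-(n : ℤ)) :=
    ENNReal.tsum_comp_le_tsum_of_injective Subtype.val_injective _
  have h3 : ∑' n : ℕ, (2:ℝ≥0∞) ^ (-(n : ℤ)) = ∑' n : ℕ, (2⁻¹ : ℝ≥0∞) ^ n := by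
    refine tsum_congr fun n => ?_
    rw [ENNReal.zpow_neg, ← ENNReal.inv_pow, zpow_natCast]
  have h4 : ∑' n : ℕ, (2⁻¹ : ℝ≥0∞) ^ n ≠ ∞ := by
    rw [ENNReal.tsum_geometric, ENNReal.one_sub_inv_two]
    simp
  exact ne_top_of_le_ne_top (h3 ▸ h4) (h1.trans h2)

lemma holder_step {p : ℝ} (hp : 1 ≤ p) {α : Type*} [MeasurableSpace α] (ν : Measure α)
    (f : α → ℝ≥0∞) (hf : Measurable f) (hT : ν univ ≠ ∞) :
    ((∫⁻ y, f y ∂ν) / ν univ) ^ p * ν univ ≤ ∫⁻ y, f y ^ p ∂ν := by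
  set T := ν univ with hTdef
  rcases eq_or_ne T 0 with hT0 | hT0
  · rw [hT0, mul_zero]; exact zero_le
  have hp0 : (0:ℝ) < p := lt_of_lt_of_le one_pos hp
  have key : (∫⁻ y, f y ∂ν) ^ p ≤ (∫⁻ y, f y ^ p ∂ν) * T ^ (p - 1) := by
    rcases hp.eq_or_lt with rfl | hp1
    · simp [ENNReal.rpow_one]
    · have hpq : p.HolderConjugate (Real.conjExponent p) := Real.HolderConjugate.conjExponent hp1
      have h1 : ∫⁻ y, f y ∂ν
          ≤ (∫⁻ y, f y ^ p ∂ν) ^ (1/p) * T ^ (1 / Real.conjExponent p) := by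
        have := ENNReal.lintegral_mul_le_Lp_mul_Lq ν hpq hf.aemeasurable
          (aemeasurable_const : AEMeasurable (fun _ : α => (1:ℝ≥0∞)) ν)
        simpa [ENNReal.one_rpow, lintegral_one] using this
      have hexp : 1 / Real.conjExponent p * p = p - 1 := by
        have hc : 1 / p + 1 / Real.conjExponent p = 1 := by
          simpa [one_div] using hpq.inv_add_inv_eq_one
        have h1p : 1 / p * p = 1 := one_div_mul_cancel hp0.ne'
        have := congrArg (fun t => t * p) hc
        simp only [add_mul, one_mul] at this
        rw [h1p] at this
        linarith
      calc (∫⁻ y, f y ∂ν) ^ p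
          ≤ ((∫⁻ y, f y ^ p ∂ν) ^ (1/p) * T ^ (1 / Real.conjExponent p)) ^ p :=
            ENNReal.rpow_le_rpow h1 hp0.le
        _ = (∫⁻ y, f y ^ p ∂ν) * T ^ (p - 1) := by
            rw [ENNReal.mul_rpow_of_nonneg _ _ hp0.le, ← ENNReal.rpow_mul, ← ENNReal.rpow_mul,
              one_div_mul_cancel hp0.ne', ENNReal.rpow_one, hexp]
  have hTp0 : T ^ p ≠ 0 := by
    simp only [ne_eq, ENNReal.rpow_eq_zero_iff, not_or, not_and_or]
    exact ⟨Or.inl hT0, Or.inl hT⟩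
  have hTptop : T ^ p ≠ ∞ := ENNReal.rpow_ne_top_of_nonneg hp0.le hT
  have hTT : T ^ (p - 1) * T = T ^ p := by
    calc T ^ (p - 1) * T = T ^ (p - 1) * T ^ (1:ℝ) := by rw [ENNReal.rpow_one]
      _ = T ^ (p - 1 + 1) := (ENNReal.rpow_add _ _ hT0 hT).symm
      _ = T ^ p := by rw [sub_add_cancel]
  rw [ENNReal.div_rpow_of_nonneg _ _ hp0.le]
  calc (∫⁻ y, f y ∂ν) ^ p / T ^ p * T
      ≤ (∫⁻ y, f y ^ p ∂ν) * T ^ (p - 1) / T ^ p * T :=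
        mul_le_mul_left (ENNReal.div_le_div key le_rfl) T
    _ = (∫⁻ y, f y ^ p ∂ν) * (T ^ (p - 1) * T) * (T ^ p)⁻¹ := by
        rw [div_eq_mul_inv]; ring
    _ = ∫⁻ y, f y ^ p ∂ν := by
        rw [hTT, mul_assoc, ENNReal.mul_inv_cancel hTp0 hTptop, mul_one]


end Helpers

/-- Proposition 1 for the non-centered operator: for the disjoint union `𝔛` of spaces `𝔛_i`
(each of diameter `≤ 1` and total measure `≤ 2^(-i)`, glued at mutual distance `k₀ + 1`) and
`1 ≤ k ≤ k₀`, `p ∈ [1,∞)`, the operator `M_{k,𝔛}` is of strong type `(p,p)` iff the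
operators `M_{k,𝔛_i}` satisfy the strong type `(p,p)` inequality with a constant independent
of `i`; moreover if each constant is at most `c̃` then
`‖M_{k,𝔛} f‖_p^p ≤ (c̃^p + 1) ‖f‖_p^p`. -/
theorem stmt15 (Λ : Set ℕ) (X : Λ → Type*) [∀ i, MeasurableSpace (X i)]
    (d : ∀ i, X i → X i → ℝ) (μ : ∀ i, Measure (X i))
    (k₀ k p : ℝ) (hk₀ : 1 ≤ k₀) (hk1 : 1 ≤ k) (hkk₀ : k ≤ k₀) (hp : 1 ≤ p)
    (hdiam : ∀ i (x y : X i), d i x y ≤ 1)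
    (hμtot : ∀ i : Λ, μ i Set.univ ≤ 2 ^ (-((i : ℕ) : ℤ))) :
    ((∃ C : ℝ≥0∞, C ≠ ∞ ∧ ∀ f : (Σ i, X i) → ℝ≥0∞, Measurable f →
        ∫⁻ x, (MkOp (unionDist X d k₀) (unionMeasure X μ) k f x) ^ p ∂(unionMeasure X μ)
          ≤ C ^ p * ∫⁻ x, f x ^ p ∂(unionMeasure X μ))
      ↔ (∃ c : ℝ≥0∞, c ≠ ∞ ∧ ∀ (i : Λ) (g : X i → ℝ≥0∞), Measurable g →
          ∫⁻ x, (MkOp (d i) (μ i) k g x) ^ p ∂(μ i) ≤ c ^ p * ∫⁻ x, g x ^ p ∂(μ i))) ∧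
    ∀ c : ℝ≥0∞,
      (∀ (i : Λ) (g : X i → ℝ≥0∞), Measurable g →
        ∫⁻ x, (MkOp (d i) (μ i) k g x) ^ p ∂(μ i) ≤ c ^ p * ∫⁻ x, g x ^ p ∂(μ i)) →
      ∀ f : (Σ i, X i) → ℝ≥0∞, Measurable f →
        ∫⁻ x, (MkOp (unionDist X d k₀) (unionMeasure X μ) k f x) ^ p ∂(unionMeasure X μ)
          ≤ (c ^ p + 1) * ∫⁻ x, f x ^ p ∂(unionMeasure X μ) := by
  have hk : (0:ℝ) < k := lt_of_lt_of_le one_pos hk1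
  have hp0 : (0:ℝ) < p := lt_of_lt_of_le one_pos hp
  have main : ∀ c : ℝ≥0∞,
      (∀ (i : Λ) (g : X i → ℝ≥0∞), Measurable g →
        ∫⁻ x, (MkOp (d i) (μ i) k g x) ^ p ∂(μ i) ≤ c ^ p * ∫⁻ x, g x ^ p ∂(μ i)) →
      ∀ f : (Σ i, X i) → ℝ≥0∞, Measurable f →
        ∫⁻ x, (MkOp (unionDist X d k₀) (unionMeasure X μ) k f x) ^ p ∂(unionMeasure X μ)
          ≤ (c ^ p + 1) * ∫⁻ x, f x ^ p ∂(unionMeasure X μ) := by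
    intro c hc f hf
    set ν := unionMeasure X μ with hν
    set B : ℝ≥0∞ := (∫⁻ y, f y ∂ν) / ν univ with hB
    have hkey : ∀ (i : Λ) (x : X i),
        (MkOp (unionDist X d k₀) ν k f ⟨i, x⟩) ^ p
          ≤ (MkOp (d i) (μ i) k (fun z => f ⟨i, z⟩) x) ^ p + B ^ p := by
      intro i x
      have h1 := MkOp_union_le d μ k₀ hk1 hkk₀ hk₀ hdiam f i x
      have h2 : (MkOp (unionDist X d k₀) ν k f ⟨i, x⟩) ^ p
          ≤ (max (MkOp (d i) (μ i) k (fun z => f ⟨i, z⟩) x) B) ^ p :=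
        ENNReal.rpow_le_rpow h1 hp0.le
      refine h2.trans ?_
      rcases le_total (MkOp (d i) (μ i) k (fun z => f ⟨i, z⟩) x) B with h | h
      · rw [max_eq_right h]; exact le_add_self
      · rw [max_eq_left h]; exact le_add_right le_rfl
    calc ∫⁻ x, (MkOp (unionDist X d k₀) ν k f x) ^ p ∂ν
        = ∑' i : Λ, ∫⁻ x, (MkOp (unionDist X d k₀) ν k f ⟨i, x⟩) ^ p ∂(μ i) :=
          lintegral_union' μ _
      _ ≤ ∑' i : Λ, ∫⁻ x, ((MkOp (d i) (μ i) k (fun z => f ⟨i, z⟩) x) ^ p + B ^ p) ∂(μ i) :=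
          ENNReal.tsum_le_tsum fun i => lintegral_mono fun x => hkey i x
      _ = ∑' i : Λ, ((∫⁻ x, (MkOp (d i) (μ i) k (fun z => f ⟨i, z⟩) x) ^ p ∂(μ i))
            + B ^ p * μ i univ) := by
          refine tsum_congr fun i => ?_
          rw [lintegral_add_right _ measurable_const, lintegral_const]
      _ ≤ ∑' i : Λ, (c ^ p * (∫⁻ x, f ⟨i, x⟩ ^ p ∂(μ i)) + B ^ p * μ i univ) :=
          ENNReal.tsum_le_tsum fun i =>
            add_le_add_left (hc i _ (hf.comp (measurable_sigmaMk' i))) _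
      _ = c ^ p * (∑' i : Λ, ∫⁻ x, f ⟨i, x⟩ ^ p ∂(μ i)) + B ^ p * (∑' i : Λ, μ i univ) := by
          rw [ENNReal.tsum_add, ENNReal.tsum_mul_left, ENNReal.tsum_mul_left]
      _ = c ^ p * (∫⁻ x, f x ^ p ∂ν) + B ^ p * ν univ := by
          rw [← lintegral_union' μ (fun y => f y ^ p)]
          congr 2
          rw [hν, unionMeasure_apply']
          simp
      _ ≤ c ^ p * (∫⁻ x, f x ^ p ∂ν) + (∫⁻ x, f x ^ p ∂ν) :=
          add_le_add le_rfl (holder_step hp ν f hf (unionMeasure_univ_ne_top μ hμtot))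
      _ = (c ^ p + 1) * (∫⁻ x, f x ^ p ∂ν) := by ring
  refine ⟨⟨?_, ?_⟩, main⟩
  · rintro ⟨C, hC, hbound⟩
    refine ⟨C, hC, fun i g hg => ?_⟩
    set f := Function.extend (Sigma.mk i) g 0 with hfdef
    have hf : Measurable f :=
      (measurableEmbedding_sigmaMk' i).measurable_extend hg measurable_const
    have hgz : ∀ z : X i, f ⟨i, z⟩ = g z := fun z => sigma_mk_injective.extend_apply g 0 z
    calc ∫⁻ x, (MkOp (d i) (μ i) k g x) ^ p ∂(μ i)
        ≤ ∫⁻ x, (MkOp (unionDist X d k₀) (unionMeasure X μ) k f ⟨i, x⟩) ^ p ∂(μ i) :=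
          lintegral_mono fun x =>
            ENNReal.rpow_le_rpow (le_MkOp_union d μ k₀ hk1 hkk₀ hk₀ hdiam i g x) hp0.le
      _ ≤ ∑' j : Λ, ∫⁻ x, (MkOp (unionDist X d k₀) (unionMeasure X μ) k f ⟨j, x⟩) ^ p ∂(μ j) :=
          ENNReal.le_tsum i
      _ = ∫⁻ y, (MkOp (unionDist X d k₀) (unionMeasure X μ) k f y) ^ p ∂(unionMeasure X μ) :=
          (lintegral_union' μ
            (fun y => (MkOp (unionDist X d k₀) (unionMeasure X μ) k f y) ^ p)).symm
      _ ≤ C ^ p * ∫⁻ y, f y ^ p ∂(unionMeasure X μ) := hbound f hf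
      _ = C ^ p * ∫⁻ x, g x ^ p ∂(μ i) := by
          rw [lintegral_union' μ (fun y => f y ^ p), tsum_eq_single i]
          · congr 1
            exact lintegral_congr fun z => by rw [hgz]
          · intro j hj
            have hz : ∀ x : X j, f ⟨j, x⟩ = 0 := fun x =>
              Function.extend_apply' _ _ _
                (by rintro ⟨a, h⟩; exact hj (congrArg Sigma.fst h).symm)
            simp [hz, ENNReal.zero_rpow_of_pos hp0]
  · rintro ⟨c, hc, hbound⟩
    refine ⟨(c ^ p + 1) ^ (1/p), ?_, fun f hf => ?_⟩
    · exact ENNReal.rpow_ne_top_of_nonneg (by positivity)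
        (ENNReal.add_ne_top.2 ⟨ENNReal.rpow_ne_top_of_nonneg hp0.le hc, ENNReal.one_ne_top⟩)
    · have hCp : ((c ^ p + 1) ^ (1/p)) ^ p = c ^ p + 1 := by
        rw [← ENNReal.rpow_mul, one_div_mul_cancel hp0.ne', ENNReal.rpow_one]
      rw [hCp]
      exact main c hbound f hf
end
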